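/- arXiv:1604.02187 — 7 statements merged into one kernel-verified Lean document; each statement's English description precedes it below -/
import Mathlib

section
/- First Korn inequality: for any vector field v ∈ [H₀¹(Ω)]² on a bounded domain Ω ⊂ ℝ², one has 2‖ε(v)‖²_{L²(Ω)} ≥ ‖∇v‖²_{L²(Ω)}, where ε(v) = (∇v + (∇v)ᵀ)/2. -/
open MeasureTheory

noncomputable section

abbrev V2 := EuclideanSpace ℝ (Fin 2)

def e2 (j : Fin 2) : V2 := EuclideanSpace.single j 1

def pd (f : V2 → ℝ) (j : Fin 2) (x : V2) : ℝ := fderiv ℝ f x (e2 j)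

/-- the Jacobian entry `(∇v)_{jk} = ∂v_j/∂x_k` -/
def grad (v : V2 → V2) (x : V2) (j k : Fin 2) : ℝ := pd (fun y => v y j) k x

/-- the symmetric gradient `ε(v)_{jk}` -/
def epsF (v : V2 → V2) (j k : Fin 2) : V2 → ℝ :=
  fun x => (grad v x j k + grad v x k j) / 2

namespace KornAux

variable {f g : V2 → ℝ}

lemma pd_eq_zero_of_nmem {x : V2} (hx : x ∉ tsupport f) (j : Fin 2) :
    pd f j x = 0 := by
  have : fderiv ℝ f x = 0 := by
    by_contra h
    exact hx (support_fderiv_subset ℝ (by simpa [Function.mem_support] using h))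
  simp [pd, this]

lemma contDiff_pd (hf : ContDiff ℝ (⊤ : ℕ∞) f) (j : Fin 2) :
    ContDiff ℝ (⊤ : ℕ∞) (pd f j) := by
  have h1 : ContDiff ℝ (⊤ : ℕ∞) (fderiv ℝ f) :=
    hf.fderiv_right (by exact_mod_cast le_top)
  exact (ContinuousLinearMap.apply ℝ ℝ (e2 j)).contDiff.comp h1

lemma hcs_pd (hf : HasCompactSupport f) (j : Fin 2) :
    HasCompactSupport (pd f j) := by
  apply HasCompactSupport.intro hf
  intro x hx
  exact pd_eq_zero_of_nmem hx j

lemma pd_comm (hf : ContDiff ℝ (⊤ : ℕ∞) f) (j k : Fin 2) (x : V2) :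
    pd (pd f j) k x = pd (pd f k) j x := by
  have h1 : ContDiff ℝ (⊤ : ℕ∞) (fderiv ℝ f) :=
    hf.fderiv_right (by exact_mod_cast le_top)
  have hd : DifferentiableAt ℝ (fderiv ℝ f) x :=
    (h1.differentiable (by simp)).differentiableAt
  have hap : ∀ (u w : V2),
      fderiv ℝ (fun y => fderiv ℝ f y w) x u = fderiv ℝ (fderiv ℝ f) x u w := by
    intro u w
    have h := (hd.hasFDerivAt.clm_apply (hasFDerivAt_const w x)).fderiv
    rw [h]; simp
  have hsymm : IsSymmSndFDerivAt ℝ f x := by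
    apply hf.contDiffAt.isSymmSndFDerivAt
    rw [minSmoothness_of_isRCLikeNormedField]; exact WithTop.coe_le_coe.mpr (le_top : (2 : ℕ∞) ≤ ⊤)
  calc pd (pd f j) k x = fderiv ℝ (fderiv ℝ f) x (e2 k) (e2 j) := hap _ _
    _ = fderiv ℝ (fderiv ℝ f) x (e2 j) (e2 k) := hsymm.eq _ _
    _ = pd (pd f k) j x := (hap _ _).symm

lemma integrable_mul (hf : Continuous f) (hg : Continuous g)
    (hfs : HasCompactSupport f) :
    Integrable (fun x => f x * g x) (volume : Measure V2) :=
  (hf.mul hg).integrable_of_hasCompactSupport (hfs.mul_right)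

lemma ibp (hf : ContDiff ℝ (⊤ : ℕ∞) f) (hg : ContDiff ℝ (⊤ : ℕ∞) g)
    (hfs : HasCompactSupport f) (j : Fin 2) :
    ∫ x, f x * pd g j x = - ∫ x, pd f j x * g x := by
  apply integral_mul_fderiv_eq_neg_fderiv_mul_of_integrable
  · exact integrable_mul (contDiff_pd hf j).continuous hg.continuous (hcs_pd hfs j)
  · exact integrable_mul hf.continuous (contDiff_pd hg j).continuous hfs
  · exact integrable_mul hf.continuous hg.continuous hfs
  · exact fun x _ => hf.differentiable (by simp) x
  · exact fun x _ => hg.differentiable (by simp) x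

lemma key (hf : ContDiff ℝ (⊤ : ℕ∞) f) (hg : ContDiff ℝ (⊤ : ℕ∞) g)
    (hfs : HasCompactSupport f) (j k : Fin 2) :
    ∫ x, pd f k x * pd g j x = ∫ x, pd f j x * pd g k x := by
  have h1 : ∫ x, f x * pd (pd g j) k x = - ∫ x, pd f k x * pd g j x :=
    ibp hf (contDiff_pd hg j) hfs k
  have h2 : ∫ x, f x * pd (pd g k) j x = - ∫ x, pd f j x * pd g k x :=
    ibp hf (contDiff_pd hg k) hfs j
  have h3 : ∀ x, pd (pd g j) k x = pd (pd g k) j x := pd_comm hg j k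
  have h4 : ∫ x, f x * pd (pd g j) k x = ∫ x, f x * pd (pd g k) j x := by
    simp only [h3]
  rw [h1, h2] at h4
  linarith

lemma korn_core (f0 f1 : V2 → ℝ) (h0 : ContDiff ℝ (⊤ : ℕ∞) f0)
    (h1 : ContDiff ℝ (⊤ : ℕ∞) f1) (s0 : HasCompactSupport f0)
    (s1 : HasCompactSupport f1) :
    (∫ x, ((pd f0 0 x ^ 2 + pd f0 1 x ^ 2) + (pd f1 0 x ^ 2 + pd f1 1 x ^ 2))) ≤
      2 * ∫ x, ((((pd f0 0 x + pd f0 0 x) / 2) ^ 2 +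
          ((pd f0 1 x + pd f1 0 x) / 2) ^ 2) +
        (((pd f1 0 x + pd f0 1 x) / 2) ^ 2 +
          ((pd f1 1 x + pd f1 1 x) / 2) ^ 2)) := by
  have Iaa : Integrable (fun x => pd f0 0 x * pd f0 0 x) (volume : Measure V2) :=
    integrable_mul (contDiff_pd h0 0).continuous (contDiff_pd h0 0).continuous
      (hcs_pd s0 0)
  have Ibb : Integrable (fun x => pd f0 1 x * pd f0 1 x) (volume : Measure V2) :=
    integrable_mul (contDiff_pd h0 1).continuous (contDiff_pd h0 1).continuous
      (hcs_pd s0 1)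
  have Icc : Integrable (fun x => pd f1 0 x * pd f1 0 x) (volume : Measure V2) :=
    integrable_mul (contDiff_pd h1 0).continuous (contDiff_pd h1 0).continuous
      (hcs_pd s1 0)
  have Idd : Integrable (fun x => pd f1 1 x * pd f1 1 x) (volume : Measure V2) :=
    integrable_mul (contDiff_pd h1 1).continuous (contDiff_pd h1 1).continuous
      (hcs_pd s1 1)
  have Ibc : Integrable (fun x => pd f0 1 x * pd f1 0 x) (volume : Measure V2) :=
    integrable_mul (contDiff_pd h0 1).continuous (contDiff_pd h1 0).continuous
      (hcs_pd s0 1)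
  have Iad : Integrable (fun x => pd f0 0 x * pd f1 1 x) (volume : Measure V2) :=
    integrable_mul (contDiff_pd h0 0).continuous (contDiff_pd h1 1).continuous
      (hcs_pd s0 0)
  -- LHS split
  have hL1 : ∫ x, ((pd f0 0 x * pd f0 0 x + pd f0 1 x * pd f0 1 x) +
        (pd f1 0 x * pd f1 0 x + pd f1 1 x * pd f1 1 x))
      = (∫ x, (pd f0 0 x * pd f0 0 x + pd f0 1 x * pd f0 1 x)) +
        ∫ x, (pd f1 0 x * pd f1 0 x + pd f1 1 x * pd f1 1 x) :=
    integral_add (Iaa.add Ibb) (Icc.add Idd)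
  have hL2 : ∫ x, (pd f0 0 x * pd f0 0 x + pd f0 1 x * pd f0 1 x)
      = (∫ x, pd f0 0 x * pd f0 0 x) + ∫ x, pd f0 1 x * pd f0 1 x :=
    integral_add Iaa Ibb
  have hL3 : ∫ x, (pd f1 0 x * pd f1 0 x + pd f1 1 x * pd f1 1 x)
      = (∫ x, pd f1 0 x * pd f1 0 x) + ∫ x, pd f1 1 x * pd f1 1 x :=
    integral_add Icc Idd
  have hL : (∫ x, ((pd f0 0 x ^ 2 + pd f0 1 x ^ 2) + (pd f1 0 x ^ 2 + pd f1 1 x ^ 2)))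
      = (∫ x, pd f0 0 x * pd f0 0 x) + (∫ x, pd f0 1 x * pd f0 1 x)
        + ((∫ x, pd f1 0 x * pd f1 0 x) + (∫ x, pd f1 1 x * pd f1 1 x)) := by
    rw [show (fun x => ((pd f0 0 x ^ 2 + pd f0 1 x ^ 2) + (pd f1 0 x ^ 2 + pd f1 1 x ^ 2)))
        = fun x => (pd f0 0 x * pd f0 0 x + pd f0 1 x * pd f0 1 x)
          + (pd f1 0 x * pd f1 0 x + pd f1 1 x * pd f1 1 x) from
      funext fun x => by ring]
    rw [hL1, hL2, hL3]
  -- RHS split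
  have hR1 : ∫ x, ((pd f0 0 x * pd f0 0 x + pd f1 1 x * pd f1 1 x) +
        ((1/2 : ℝ) * (pd f0 1 x * pd f0 1 x)
          + (pd f0 1 x * pd f1 0 x + (1/2 : ℝ) * (pd f1 0 x * pd f1 0 x))))
      = (∫ x, (pd f0 0 x * pd f0 0 x + pd f1 1 x * pd f1 1 x)) +
        ∫ x, ((1/2 : ℝ) * (pd f0 1 x * pd f0 1 x)
          + (pd f0 1 x * pd f1 0 x + (1/2 : ℝ) * (pd f1 0 x * pd f1 0 x))) :=
    integral_add (Iaa.add Idd) ((Ibb.const_mul _).add (Ibc.add (Icc.const_mul _)))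
  have hR2 : ∫ x, (pd f0 0 x * pd f0 0 x + pd f1 1 x * pd f1 1 x)
      = (∫ x, pd f0 0 x * pd f0 0 x) + ∫ x, pd f1 1 x * pd f1 1 x :=
    integral_add Iaa Idd
  have hR3 : ∫ x, ((1/2 : ℝ) * (pd f0 1 x * pd f0 1 x)
        + (pd f0 1 x * pd f1 0 x + (1/2 : ℝ) * (pd f1 0 x * pd f1 0 x)))
      = (∫ x, (1/2 : ℝ) * (pd f0 1 x * pd f0 1 x)) +
        ∫ x, (pd f0 1 x * pd f1 0 x + (1/2 : ℝ) * (pd f1 0 x * pd f1 0 x)) :=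
    integral_add (Ibb.const_mul _) (Ibc.add (Icc.const_mul _))
  have hR4 : ∫ x, (pd f0 1 x * pd f1 0 x + (1/2 : ℝ) * (pd f1 0 x * pd f1 0 x))
      = (∫ x, pd f0 1 x * pd f1 0 x) + ∫ x, (1/2 : ℝ) * (pd f1 0 x * pd f1 0 x) :=
    integral_add Ibc (Icc.const_mul _)
  have hR5 : ∫ x, (1/2 : ℝ) * (pd f0 1 x * pd f0 1 x)
      = (1/2 : ℝ) * ∫ x, pd f0 1 x * pd f0 1 x :=
    integral_const_mul _ _
  have hR6 : ∫ x, (1/2 : ℝ) * (pd f1 0 x * pd f1 0 x)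
      = (1/2 : ℝ) * ∫ x, pd f1 0 x * pd f1 0 x :=
    integral_const_mul _ _
  have hR : (∫ x, ((((pd f0 0 x + pd f0 0 x) / 2) ^ 2 +
          ((pd f0 1 x + pd f1 0 x) / 2) ^ 2) +
        (((pd f1 0 x + pd f0 1 x) / 2) ^ 2 +
          ((pd f1 1 x + pd f1 1 x) / 2) ^ 2)))
      = (∫ x, pd f0 0 x * pd f0 0 x) + (∫ x, pd f1 1 x * pd f1 1 x)
        + ((1/2 : ℝ) * (∫ x, pd f0 1 x * pd f0 1 x)
          + ((∫ x, pd f0 1 x * pd f1 0 x)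
            + (1/2 : ℝ) * (∫ x, pd f1 0 x * pd f1 0 x))) := by
    rw [show (fun x => ((((pd f0 0 x + pd f0 0 x) / 2) ^ 2 +
          ((pd f0 1 x + pd f1 0 x) / 2) ^ 2) +
        (((pd f1 0 x + pd f0 1 x) / 2) ^ 2 +
          ((pd f1 1 x + pd f1 1 x) / 2) ^ 2)))
        = fun x => (pd f0 0 x * pd f0 0 x + pd f1 1 x * pd f1 1 x)
          + ((1/2 : ℝ) * (pd f0 1 x * pd f0 1 x)
            + (pd f0 1 x * pd f1 0 x + (1/2 : ℝ) * (pd f1 0 x * pd f1 0 x))) from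
      funext fun x => by ring]
    rw [hR1, hR2, hR3, hR4, hR5, hR6]
  -- the key identity via integration by parts
  have hkey : (∫ x, pd f0 1 x * pd f1 0 x) = ∫ x, pd f0 0 x * pd f1 1 x :=
    (key h0 h1 s0 1 0).symm
  -- positivity of the square of the divergence
  have hpos : 0 ≤ ∫ x, (pd f0 0 x + pd f1 1 x) * (pd f0 0 x + pd f1 1 x) :=
    integral_nonneg fun x => mul_self_nonneg _
  have he1 : ∫ x, (pd f0 0 x * pd f0 0 x +
        ((2 : ℝ) * (pd f0 0 x * pd f1 1 x) + pd f1 1 x * pd f1 1 x))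
      = (∫ x, pd f0 0 x * pd f0 0 x) +
        ∫ x, ((2 : ℝ) * (pd f0 0 x * pd f1 1 x) + pd f1 1 x * pd f1 1 x) :=
    integral_add Iaa ((Iad.const_mul _).add Idd)
  have he2 : ∫ x, ((2 : ℝ) * (pd f0 0 x * pd f1 1 x) + pd f1 1 x * pd f1 1 x)
      = (∫ x, (2 : ℝ) * (pd f0 0 x * pd f1 1 x)) + ∫ x, pd f1 1 x * pd f1 1 x :=
    integral_add (Iad.const_mul _) Idd
  have he3 : ∫ x, (2 : ℝ) * (pd f0 0 x * pd f1 1 x)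
      = (2 : ℝ) * ∫ x, pd f0 0 x * pd f1 1 x :=
    integral_const_mul _ _
  have hexp : (∫ x, (pd f0 0 x + pd f1 1 x) * (pd f0 0 x + pd f1 1 x))
      = (∫ x, pd f0 0 x * pd f0 0 x)
        + ((2 : ℝ) * (∫ x, pd f0 0 x * pd f1 1 x) + (∫ x, pd f1 1 x * pd f1 1 x)) := by
    rw [show (fun x => (pd f0 0 x + pd f1 1 x) * (pd f0 0 x + pd f1 1 x))
        = fun x => pd f0 0 x * pd f0 0 x
          + ((2 : ℝ) * (pd f0 0 x * pd f1 1 x) + pd f1 1 x * pd f1 1 x) from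
      funext fun x => by ring]
    rw [he1, he2, he3]
  rw [hL, hR, hkey]
  rw [hexp] at hpos
  linarith

end KornAux

open KornAux

/-- First Korn inequality: for a bounded domain `Ω ⊆ ℝ²` and `v ∈ [H₀¹(Ω)]²`
(stated for smooth vector fields compactly supported in `Ω`, which are dense in `H₀¹`),
`2‖ε(v)‖²_{L²(Ω)} ≥ ‖∇v‖²_{L²(Ω)}`. -/
theorem stmt2 (Ω : Set V2) (hΩo : IsOpen Ω) (hΩb : Bornology.IsBounded Ω)
    (v : V2 → V2) (hv : ContDiff ℝ (⊤ : ℕ∞) v)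
    (hsupp : HasCompactSupport v) (hin : tsupport v ⊆ Ω) :
    (∫ x in Ω, ∑ j, ∑ k, (grad v x j k) ^ 2) ≤
      2 * ∫ x in Ω, ∑ j, ∑ k, (epsF v j k x) ^ 2 := by
  have hfc : ∀ j : Fin 2, ContDiff ℝ (⊤ : ℕ∞) (fun y => v y j) := by
    intro j
    exact contDiff_euclidean.1 hv j
  have hts : ∀ j : Fin 2, tsupport (fun y => v y j) ⊆ tsupport v := by
    intro j
    apply closure_mono
    intro y hy
    simp only [Function.mem_support] at hy ⊢
    intro h
    apply hy
    rw [h]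
    rfl
  have hcsf : ∀ j : Fin 2, HasCompactSupport (fun y => v y j) := by
    intro j
    apply HasCompactSupport.intro hsupp
    intro x hx
    have := image_eq_zero_of_notMem_tsupport hx
    simp only [this]
    rfl
  have hgz : ∀ x, x ∉ Ω → ∀ j k : Fin 2, grad v x j k = 0 := by
    intro x hx j k
    have hx' : x ∉ tsupport (fun y => v y j) := fun h => hx (hin (hts j h))
    exact pd_eq_zero_of_nmem hx' k
  rw [setIntegral_eq_integral_of_forall_compl_eq_zero
    (f := fun x => ∑ j, ∑ k, (grad v x j k) ^ 2)
    (fun x hx => by simp [hgz x hx]),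
    setIntegral_eq_integral_of_forall_compl_eq_zero
    (f := fun x => ∑ j, ∑ k, (epsF v j k x) ^ 2)
    (fun x hx => by simp [epsF, hgz x hx])]
  simp only [Fin.sum_univ_two, grad, epsF]
  exact korn_core (fun y => v y 0) (fun y => v y 1) (hfc 0) (hfc 1) (hcsf 0) (hcsf 1)
end
end

section
/- Second-order Korn inequality: for any v ∈ [H₀²(Ω)]² on a bounded domain Ω ⊂ ℝ², one has 2‖∇ε(v)‖²_{L²(Ω)} ≥ ‖∇²v‖²_{L²(Ω)}, where ∇ε(v) is the third-order tensor with components ∂_{x_i} ε_{jk}(v) and ∇²v is the Hessian tensor of v. -/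
open MeasureTheory

noncomputable section

lemma one_le_coeTop : ((⊤:ℕ∞) : WithTop ℕ∞) ≠ 0 := by
  simp

lemma pd_contDiff {f : V2 → ℝ} (hf : ContDiff ℝ (⊤ : ℕ∞) f) (j : Fin 2) :
    ContDiff ℝ (⊤ : ℕ∞) (pd f j) :=
  (hf.fderiv_right (m := ((⊤:ℕ∞) : WithTop ℕ∞)) (le_of_eq ENat.coe_top_add_one)).clm_apply contDiff_const

lemma pd_hcs {f : V2 → ℝ} (hf : HasCompactSupport f) (j : Fin 2) :
    HasCompactSupport (pd f j) :=
  hf.fderiv_apply ℝ (e2 j)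

lemma pd_tsupport {f : V2 → ℝ} (j : Fin 2) : tsupport (pd f j) ⊆ tsupport f := by
  refine closure_minimal ?_ (isClosed_tsupport f)
  intro x hx
  have : fderiv ℝ f x ≠ 0 := by
    intro h; apply hx; simp [pd, h]
  exact support_fderiv_subset ℝ this

lemma pd_comm {f : V2 → ℝ} (hf : ContDiff ℝ (⊤ : ℕ∞) f) (i j : Fin 2) (x : V2) :
    pd (pd f j) i x = pd (pd f i) j x := by
  have hdf : DifferentiableAt ℝ (fderiv ℝ f) x :=
    ((hf.fderiv_right (m := ((⊤:ℕ∞) : WithTop ℕ∞)) (le_of_eq ENat.coe_top_add_one)).differentiable one_le_coeTop) x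
  have key : ∀ w u : V2, fderiv ℝ (fun y => fderiv ℝ f y w) x u = fderiv ℝ (fderiv ℝ f) x u w := by
    intro w u
    rw [fderiv_clm_apply hdf (differentiableAt_const w)]
    simp
  have hsym := second_derivative_symmetric
    (fun y => ((hf.differentiable one_le_coeTop) y).hasFDerivAt) hdf.hasFDerivAt (e2 i) (e2 j)
  show fderiv ℝ (pd f j) x (e2 i) = fderiv ℝ (pd f i) x (e2 j)
  have e1 : fderiv ℝ (pd f j) x (e2 i) = fderiv ℝ (fderiv ℝ f) x (e2 i) (e2 j) := key (e2 j) (e2 i)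
  have e2' : fderiv ℝ (pd f i) x (e2 j) = fderiv ℝ (fderiv ℝ f) x (e2 j) (e2 i) := key (e2 i) (e2 j)
  rw [e1, e2', hsym]

lemma ibp_swap {a b : V2 → ℝ} (ha : ContDiff ℝ (⊤ : ℕ∞) a) (hb : ContDiff ℝ (⊤ : ℕ∞) b)
    (hsa : HasCompactSupport a) (hsb : HasCompactSupport b) (j k : Fin 2) :
    ∫ x, pd a j x * pd b k x = ∫ x, pd a k x * pd b j x := by
  obtain ⟨C, hC⟩ := ContDiff.lipschitzWith_of_hasCompactSupport hsa ha one_le_coeTop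
  obtain ⟨D₁, hD₁⟩ := ContDiff.lipschitzWith_of_hasCompactSupport (pd_hcs hsb k)
    (pd_contDiff hb k) one_le_coeTop
  obtain ⟨D₂, hD₂⟩ := ContDiff.lipschitzWith_of_hasCompactSupport (pd_hcs hsb j)
    (pd_contDiff hb j) one_le_coeTop
  have E1 := hC.integral_lineDeriv_mul_eq hD₁ (pd_hcs hsb k) (μ := volume) (e2 j)
  have E2 := hC.integral_lineDeriv_mul_eq hD₂ (pd_hcs hsb j) (μ := volume) (e2 k)
  have ra : ∀ (m : Fin 2) (x : V2), lineDeriv ℝ a x (e2 m) = pd a m x := fun m x =>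
    ((ha.differentiable one_le_coeTop) x).lineDeriv_eq_fderiv
  have rb : ∀ (g : V2 → ℝ), ContDiff ℝ (⊤ : ℕ∞) g → ∀ (m : Fin 2) (x : V2),
      lineDeriv ℝ g x (-(e2 m)) = - pd g m x := by
    intro g hg m x
    rw [((hg.differentiable one_le_coeTop) x).lineDeriv_eq_fderiv]
    simp [pd]
  simp_rw [ra, rb _ (pd_contDiff hb k), neg_mul, integral_neg] at E1
  simp_rw [ra, rb _ (pd_contDiff hb j), neg_mul, integral_neg] at E2
  rw [E1, E2]
  congr 1
  refine integral_congr_ae (Filter.Eventually.of_forall fun x => ?_)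
  show pd (pd b k) j x * a x = pd (pd b j) k x * a x
  rw [pd_comm hb j k]

lemma pd_mul_integrable {a b : V2 → ℝ} (ha : ContDiff ℝ (⊤ : ℕ∞) a) (hb : ContDiff ℝ (⊤ : ℕ∞) b)
    (hsa : HasCompactSupport a) (j k : Fin 2) :
    Integrable (fun x => pd a j x * pd b k x) := by
  apply Continuous.integrable_of_hasCompactSupport
  · exact (pd_contDiff ha j).continuous.mul (pd_contDiff hb k).continuous
  · exact (pd_hcs hsa j).mul_right

lemma integral_double_sum (F : Fin 2 → Fin 2 → V2 → ℝ) (hF : ∀ j k, Integrable (F j k)) :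
    ∫ x, ∑ j, ∑ k, F j k x = ∑ j, ∑ k, ∫ x, F j k x := by
  rw [integral_finset_sum _ (fun j _ => integrable_finset_sum _ fun k _ => hF j k)]
  exact Finset.sum_congr rfl fun j _ => integral_finset_sum _ fun k _ => hF j k

lemma cross_nonneg {w : Fin 2 → V2 → ℝ} (hw : ∀ k, ContDiff ℝ (⊤ : ℕ∞) (w k))
    (hs : ∀ k, HasCompactSupport (w k)) :
    0 ≤ ∫ x, ∑ j, ∑ k, pd (w k) j x * pd (w j) k x := by
  have I1 : ∀ j k : Fin 2, Integrable (fun x => pd (w k) j x * pd (w j) k x) :=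
    fun j k => pd_mul_integrable (hw k) (hw j) (hs k) j k
  have I2 : ∀ j k : Fin 2, Integrable (fun x => pd (w k) k x * pd (w j) j x) :=
    fun j k => pd_mul_integrable (hw k) (hw j) (hs k) k j
  have pw : ∀ x : V2, (∑ j, pd (w j) j x) ^ 2 = ∑ j, ∑ k, pd (w k) k x * pd (w j) j x := by
    intro x; simp only [Fin.sum_univ_two]; ring
  have key : ∀ j k : Fin 2, (∫ x, pd (w k) j x * pd (w j) k x) =
      ∫ x, pd (w k) k x * pd (w j) j x :=
    fun j k => ibp_swap (hw k) (hw j) (hs k) (hs j) j k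
  calc (0:ℝ) ≤ ∫ x, (∑ j, pd (w j) j x) ^ 2 := integral_nonneg fun x => sq_nonneg _
    _ = ∫ x, ∑ j, ∑ k, pd (w k) k x * pd (w j) j x := by simp_rw [pw]
    _ = ∑ j, ∑ k, ∫ x, pd (w k) k x * pd (w j) j x := integral_double_sum _ I2
    _ = ∑ j, ∑ k, ∫ x, pd (w k) j x * pd (w j) k x := by
        exact Finset.sum_congr rfl fun j _ => Finset.sum_congr rfl fun k _ => (key j k).symm
    _ = ∫ x, ∑ j, ∑ k, pd (w k) j x * pd (w j) k x := (integral_double_sum _ I1).symm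

/-- Second-order Korn inequality: for `v ∈ [H₀²(Ω)]²` on a bounded domain `Ω ⊆ ℝ²`
(stated for smooth vector fields compactly supported in `Ω`, which are dense in `H₀²`),
`2‖∇ε(v)‖²_{L²(Ω)} ≥ ‖∇²v‖²_{L²(Ω)}`, where `(∇ε(v))_{ijk} = ∂_i ε_{jk}(v)` and
`(∇²v)_{ijk} = ∂_i ∂_j v_k`. -/
theorem stmt3 (Ω : Set V2) (hΩo : IsOpen Ω) (hΩb : Bornology.IsBounded Ω)
    (v : V2 → V2) (hv : ContDiff ℝ (⊤ : ℕ∞) v)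
    (hsupp : HasCompactSupport v) (hin : tsupport v ⊆ Ω) :
    (∫ x in Ω, ∑ i, ∑ j, ∑ k, (pd (fun y => grad v y k j) i x) ^ 2) ≤
      2 * ∫ x in Ω, ∑ i, ∑ j, ∑ k, (pd (epsF v j k) i x) ^ 2 := by
  have hu_cd : ∀ k : Fin 2, ContDiff ℝ (⊤ : ℕ∞) (fun y : V2 => v y k) := fun k =>
    (EuclideanSpace.proj k : V2 →L[ℝ] ℝ).contDiff.comp hv
  have hu_hcs : ∀ k : Fin 2, HasCompactSupport (fun y : V2 => v y k) := fun k =>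
    hsupp.comp_left (g := fun w : V2 => w k) rfl
  -- notation for second derivatives
  have hts : ∀ (i j k : Fin 2) (x : V2), x ∉ Ω → pd (pd (fun y : V2 => v y k) j) i x = 0 := by
    intro i j k x hx
    apply image_eq_zero_of_notMem_tsupport
    intro hmem
    exact hx (hin (((pd_tsupport i).trans ((pd_tsupport j).trans
      (closure_mono (Function.support_subset_iff.mpr (fun y hy => by
        intro h0; exact hy (by simp [h0])))))) hmem))
  -- epsF derivative formula
  have hE : ∀ (i j k : Fin 2) (x : V2), pd (epsF v j k) i x =
      (pd (pd (fun y : V2 => v y j) k) i x + pd (pd (fun y : V2 => v y k) j) i x) / 2 := by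
    intro i j k x
    have d1 : DifferentiableAt ℝ (pd (fun y : V2 => v y j) k) x :=
      ((pd_contDiff (hu_cd j) k).differentiable one_le_coeTop) x
    have d2 : DifferentiableAt ℝ (pd (fun y : V2 => v y k) j) x :=
      ((pd_contDiff (hu_cd k) j).differentiable one_le_coeTop) x
    show fderiv ℝ (epsF v j k) x (e2 i) = _
    have heq : epsF v j k = fun y =>
        (2:ℝ)⁻¹ * (pd (fun z : V2 => v z j) k y + pd (fun z : V2 => v z k) j y) := by
      funext y
      show (pd (fun z : V2 => v z j) k y + pd (fun z : V2 => v z k) j y) / 2 = _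
      ring
    rw [heq, fderiv_const_mul (a := fun y => pd (fun z : V2 => v z j) k y + pd (fun z : V2 => v z k) j y)
      (d1.add d2) ((2:ℝ)⁻¹), fderiv_fun_add d1 d2]
    simp [pd]
    ring
  -- extend the two set integrals to the whole space
  have eqL : (∫ x in Ω, ∑ i, ∑ j, ∑ k, (pd (fun y => grad v y k j) i x) ^ 2) =
      ∫ x, ∑ i, ∑ j, ∑ k, (pd (pd (fun y : V2 => v y k) j) i x) ^ 2 := by
    exact setIntegral_eq_integral_of_forall_compl_eq_zero fun x hx => by
      refine Finset.sum_eq_zero fun i _ => Finset.sum_eq_zero fun j _ =>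
        Finset.sum_eq_zero fun k _ => ?_
      show (pd (pd (fun y : V2 => v y k) j) i x) ^ 2 = 0
      rw [hts i j k x hx]; ring
  have eqR : (∫ x in Ω, ∑ i, ∑ j, ∑ k, (pd (epsF v j k) i x) ^ 2) =
      ∫ x, ∑ i, ∑ j, ∑ k, (pd (epsF v j k) i x) ^ 2 := by
    exact setIntegral_eq_integral_of_forall_compl_eq_zero fun x hx => by
      refine Finset.sum_eq_zero fun i _ => Finset.sum_eq_zero fun j _ =>
        Finset.sum_eq_zero fun k _ => ?_
      rw [hE i j k x, hts i k j x hx, hts i j k x hx]; ring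
  rw [eqL, eqR]
  -- integrability
  have intA : Integrable (fun x => ∑ i, ∑ j, ∑ k,
      (pd (pd (fun y : V2 => v y k) j) i x) ^ 2) := by
    refine integrable_finset_sum _ fun i _ => integrable_finset_sum _ fun j _ =>
      integrable_finset_sum _ fun k _ => ?_
    have := pd_mul_integrable (pd_contDiff (hu_cd k) j) (pd_contDiff (hu_cd k) j)
      (pd_hcs (hu_hcs k) j) i i
    simpa [pow_two] using this
  have intC : Integrable (fun x => ∑ i, ∑ j, ∑ k,
      pd (pd (fun y : V2 => v y k) j) i x * pd (pd (fun y : V2 => v y j) k) i x) := by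
    refine integrable_finset_sum _ fun i _ => integrable_finset_sum _ fun j _ =>
      integrable_finset_sum _ fun k _ => ?_
    exact pd_mul_integrable (pd_contDiff (hu_cd k) j) (pd_contDiff (hu_cd j) k)
      (pd_hcs (hu_hcs k) j) i i
  -- pointwise algebraic identity
  have pw : ∀ x : V2, 2 * (∑ i, ∑ j, ∑ k, (pd (epsF v j k) i x) ^ 2) =
      (∑ i, ∑ j, ∑ k, (pd (pd (fun y : V2 => v y k) j) i x) ^ 2) +
      ∑ i, ∑ j, ∑ k,
        pd (pd (fun y : V2 => v y k) j) i x * pd (pd (fun y : V2 => v y j) k) i x := by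
    intro x
    simp only [hE, Fin.sum_univ_two]
    ring
  have hBA : 2 * (∫ x, ∑ i, ∑ j, ∑ k, (pd (epsF v j k) i x) ^ 2) =
      (∫ x, ∑ i, ∑ j, ∑ k, (pd (pd (fun y : V2 => v y k) j) i x) ^ 2) +
      ∫ x, ∑ i, ∑ j, ∑ k,
        pd (pd (fun y : V2 => v y k) j) i x * pd (pd (fun y : V2 => v y j) k) i x := by
    rw [← integral_add intA intC, ← integral_const_mul]
    exact integral_congr_ae (Filter.Eventually.of_forall pw)
  -- the cross term is nonnegative
  have hCross : 0 ≤ ∫ x, ∑ i, ∑ j, ∑ k,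
      pd (pd (fun y : V2 => v y k) j) i x * pd (pd (fun y : V2 => v y j) k) i x := by
    have intCi : ∀ i : Fin 2, Integrable (fun x => ∑ j, ∑ k,
        pd (pd (fun y : V2 => v y k) j) i x * pd (pd (fun y : V2 => v y j) k) i x) := by
      intro i
      refine integrable_finset_sum _ fun j _ => integrable_finset_sum _ fun k _ => ?_
      exact pd_mul_integrable (pd_contDiff (hu_cd k) j) (pd_contDiff (hu_cd j) k)
        (pd_hcs (hu_hcs k) j) i i
    have split : (∫ x, ∑ i, ∑ j, ∑ k,
        pd (pd (fun y : V2 => v y k) j) i x * pd (pd (fun y : V2 => v y j) k) i x) =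
        ∑ i, ∫ x, ∑ j, ∑ k,
          pd (pd (fun y : V2 => v y k) j) i x * pd (pd (fun y : V2 => v y j) k) i x :=
      integral_finset_sum _ fun i _ => intCi i
    rw [split]
    refine Finset.sum_nonneg fun i _ => ?_
    have swap_eq : ∀ x : V2, (∑ j, ∑ k,
        pd (pd (fun y : V2 => v y k) j) i x * pd (pd (fun y : V2 => v y j) k) i x) =
        ∑ j, ∑ k, pd (pd (fun y : V2 => v y k) i) j x * pd (pd (fun y : V2 => v y j) i) k x := by
      intro x
      refine Finset.sum_congr rfl fun j _ => Finset.sum_congr rfl fun k _ => ?_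
      rw [pd_comm (hu_cd k) i j x, pd_comm (hu_cd j) i k x]
    simp_rw [swap_eq]
    exact cross_nonneg (w := fun k => pd (fun y : V2 => v y k) i)
      (fun k => pd_contDiff (hu_cd k) i) (fun k => pd_hcs (hu_hcs k) i)
  linarith [hCross, hBA]
end
end

section
/- Discrete H² Korn inequality: let 𝒯_h be a shape-regular triangulation of a bounded polygon Ω ⊂ ℝ² and let v be a piecewise H² vector field. Then ‖v‖²_{H²_h} ≤ C(‖∇_h ε_h(v)‖²_{L²} + ‖ε_h(v)‖²_{L²} + ‖v‖²_{L²} + Σ_e h_e^{-1}‖[Π_e v]‖²_{L²(e)} + Σ_{i=1,2} Σ_e h_e^{-1}‖[Π_e(∂_i v)]‖²_{L²(e)}), where the sums run over all edges e, [·] denotes the jump across e, and Π_e is the L² projection onto P_{1,−}(e)², assuming the Mardal–Winther discrete H¹ Korn inequality |w|²_{H¹_h} ≤ C(‖ε_h(w)‖² + ‖w‖² + Σ_e h_e^{-1}‖[Π_e w]‖²_{L²(e)}) for piecewise H¹ fields w. -/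
noncomputable section

/-- Discrete `H²` Korn inequality (abstract form).  Here `W` stands for the space of
piecewise `H¹` vector fields on the triangulation `𝒯_h` and `V` for the piecewise `H²`
fields; `emb` is the inclusion `V ↪ W`, `D i` is the elementwise partial derivative
`∂_i`, `epsN w = ‖ε_h(w)‖_{L²}`, `L2N w = ‖w‖_{L²}`, `H1s w = |w|_{H¹_h}`, and
`jumpSq w = Σ_e h_e⁻¹‖[Π_e w]‖²_{L²(e)}` with `Π_e` the `L²` projection onto
`P_{1,−}(e)²`.  Assuming the Mardal–Winther discrete `H¹` Korn inequality
`|w|²_{H¹_h} ≤ C₀(‖ε_h(w)‖² + ‖w‖² + jumpSq w)` for all piecewise `H¹` fields `w`,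
and using that `ε_h` commutes with `∂_i` (so `‖∇_hε_h(v)‖² = Σ_i ‖ε_h(∂_i v)‖²` and
`|v|²_{H¹_h} = Σ_i ‖∂_i v‖²_{L²}`), one gets for every piecewise `H²` field `v`:
`‖v‖²_{H²_h} ≤ C(‖∇_hε_h(v)‖² + ‖ε_h(v)‖² + ‖v‖²_{L²}
               + jumpSq v + Σ_i jumpSq (∂_i v))`. -/
theorem stmt8 (C₀ : ℝ) (hC₀ : 0 < C₀) :
    ∃ C > 0,
      ∀ (W V : Type) (emb : V → W) (D : Fin 2 → V → W)
        (epsN L2N H1s jumpSq : W → ℝ)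
        (_ : ∀ w, 0 ≤ epsN w) (_ : ∀ w, 0 ≤ L2N w) (_ : ∀ w, 0 ≤ H1s w)
        (_ : ∀ w, 0 ≤ jumpSq w)
        -- Mardal–Winther discrete H¹ Korn inequality
        (_ : ∀ w, (H1s w) ^ 2 ≤ C₀ * ((epsN w) ^ 2 + (L2N w) ^ 2 + jumpSq w))
        (v : V)
        -- `|v|²_{H¹_h} = Σ_i ‖∂_i v‖²_{L²}`
        (_ : (H1s (emb v)) ^ 2 = ∑ i, (L2N (D i v)) ^ 2),
        -- broken H² norm squared  ≤  C ( ‖∇_hε_h v‖² + ‖ε_h v‖² + ‖v‖² + jumps )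
        (L2N (emb v)) ^ 2 + (H1s (emb v)) ^ 2 + (∑ i, (H1s (D i v)) ^ 2) ≤
          C * ((∑ i, (epsN (D i v)) ^ 2) + (epsN (emb v)) ^ 2 + (L2N (emb v)) ^ 2 +
            jumpSq (emb v) + ∑ i, jumpSq (D i v)) := by
  refine ⟨C₀ ^ 2 + C₀ + 1, by positivity, ?_⟩
  intro W V emb D epsN L2N H1s jumpSq heps hL2 hH1 hj hKorn v hsum
  simp only [Fin.sum_univ_two] at *
  have k0 := hKorn (emb v)
  have k1 := hKorn (D 0 v)
  have k2 := hKorn (D 1 v)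
  nlinarith [heps (emb v), heps (D 0 v), heps (D 1 v), hL2 (emb v), hj (emb v),
    hj (D 0 v), hj (D 1 v), sq_nonneg (epsN (emb v)), sq_nonneg (L2N (emb v)),
    sq_nonneg (epsN (D 0 v)), sq_nonneg (epsN (D 1 v)), sq_nonneg C₀,
    mul_pos hC₀ hC₀]
end
end

section
/- If w ∈ [P₂(T)]² ⊕ b·P₂*(T) vanishes at the three vertices and three edge midpoints of the triangle T, then w vanishes identically on ∂T, and hence w = b·p for some p ∈ P₂*(T). -/
open MeasureTheory

noncomputable section

/-- Euclidean dot product on `ℝ²`. -/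
def dot (u v : V2) : ℝ := ∑ j, u j * v j

/-- `f : ℝ² → ℝ` is a polynomial of total degree at most `k`. -/
def PolyDeg (k : ℕ) (f : V2 → ℝ) : Prop :=
  ∃ p : MvPolynomial (Fin 2) ℝ, p.totalDegree ≤ k ∧
    ∀ x, f x = MvPolynomial.eval (fun i => x i) p

/-- a vector field all of whose components are polynomials of degree at most `k`,
i.e. an element of `[P_k]²`. -/
def PolyVecDeg (k : ℕ) (w : V2 → V2) : Prop := ∀ j, PolyDeg k (fun x => w x j)

/-- the divergence of a vector field on `ℝ²` -/
def divP (w : V2 → V2) (x : V2) : ℝ :=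
  ∑ j, fderiv ℝ (fun y => w y j) x (EuclideanSpace.single j 1)

/-- A nondegenerate triangle `T ⊆ ℝ²` with vertices `A 0, A 1, A 2`, barycentric
coordinate functions `lam i` and unit outward normals `nv i` to the edge `e_i`
opposite the vertex `A i` (the edge from `A (i+1)` to `A (i+2)`). -/
structure TriangleData where
  A : Fin 3 → V2
  lam : Fin 3 → V2 → ℝ
  nv : Fin 3 → V2
  indep : AffineIndependent ℝ A
  lam_poly : ∀ i, PolyDeg 1 (lam i)
  lam_vertex : ∀ i j, lam i (A j) = if i = j then (1 : ℝ) else 0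
  lam_sum : ∀ x, ∑ i, lam i x = 1
  nv_unit : ∀ i, ‖nv i‖ = 1
  nv_orth : ∀ i, dot (nv i) (A (i + 2) - A (i + 1)) = 0
  nv_outward : ∀ i, dot (nv i) (A i - A (i + 1)) < 0

namespace TriangleData

variable (T : TriangleData)

/-- the cubic bubble `b = λ₁λ₂λ₃` -/
def bub (x : V2) : ℝ := ∏ i, T.lam i x

/-- affine parametrization of the edge `e_i` (from `A (i+1)` at `t = 0` to
`A (i+2)` at `t = 1`) -/
def Ept (i : Fin 3) (t : ℝ) : V2 := T.A (i + 1) + t • (T.A (i + 2) - T.A (i + 1))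

/-- the unit tangent of the edge `e_i` -/
def tv (i : Fin 3) : V2 := ‖T.A (i + 2) - T.A (i + 1)‖⁻¹ • (T.A (i + 2) - T.A (i + 1))

/-- the midpoint of the edge `e_i` -/
def mid (i : Fin 3) : V2 := midpoint ℝ (T.A (i + 1)) (T.A (i + 2))

/-- the normal derivative `∂_n f` along edge `e_i`, at edge parameter `t` -/
def nder (f : V2 → ℝ) (i : Fin 3) (t : ℝ) : ℝ := fderiv ℝ f (T.Ept i t) (T.nv i)

/-- membership in `P₂*(T) = {v ∈ [P₂(T)]² : (v·n)|_e ∈ P₁(e) for every edge e}` -/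
def memP2star (p : V2 → V2) : Prop :=
  PolyVecDeg 2 p ∧ ∀ i, ∃ a c : ℝ, ∀ t : ℝ, dot (p (T.Ept i t)) (T.nv i) = a * t + c

/-- membership in `W(T) = [P₂(T)]² ⊕ b·P₂*(T)` (the first element) -/
def memW1 (w : V2 → V2) : Prop :=
  ∃ q p, PolyVecDeg 2 q ∧ T.memP2star p ∧ ∀ x, w x = q x + T.bub x • p x

/-- membership in
`P₃*(T) = {w ∈ [P₃(T)]² : ∇·w ∈ P₀(T), (w·n)|_e ∈ P₁(e) for every edge e}` -/
def memP3star (p : V2 → V2) : Prop :=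
  PolyVecDeg 3 p ∧ (∃ c : ℝ, ∀ x, divP p x = c) ∧
    ∀ i, ∃ a c : ℝ, ∀ t : ℝ, dot (p (T.Ept i t)) (T.nv i) = a * t + c

/-- membership in `W(T) = [P₂(T)]² ⊕ b·P₃*(T)` (the second element) -/
def memW2 (w : V2 → V2) : Prop :=
  ∃ q p, PolyVecDeg 2 q ∧ T.memP3star p ∧ ∀ x, w x = q x + T.bub x • p x

/-- vanishing of the 21 degrees of freedom: the values of `w` at the three vertices and
three edge midpoints, the moments `∫_e ∂_n(w·t) dτ`, and the moments
`∫_e ∂_n(w·n) τ^k dτ`, `k = 0,1`, over each edge. -/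
def dofsVanish (w : V2 → V2) : Prop :=
  (∀ i, w (T.A i) = 0) ∧ (∀ i, w (T.mid i) = 0) ∧
    (∀ i, (∫ t in (0 : ℝ)..1, T.nder (fun x => dot (w x) (T.tv i)) i t) = 0) ∧
    (∀ i, ∀ k : Fin 2,
      (∫ t in (0 : ℝ)..1, T.nder (fun x => dot (w x) (T.nv i)) i t * t ^ (k : ℕ)) = 0)

end TriangleData


lemma rep2 {f : V2 → ℝ} (hf : PolyDeg 2 f) :
    ∃ a b c d e h : ℝ, ∀ x : V2,
      f x = a + b * x 0 + c * x 1 + d * x 0 ^ 2 + e * (x 0 * x 1) + h * x 1 ^ 2 := by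
  obtain ⟨p, hdeg, heval⟩ := hf
  refine ⟨∑ v ∈ p.support, if v 0 = 0 ∧ v 1 = 0 then p.coeff v else 0,
          ∑ v ∈ p.support, if v 0 = 1 ∧ v 1 = 0 then p.coeff v else 0,
          ∑ v ∈ p.support, if v 0 = 0 ∧ v 1 = 1 then p.coeff v else 0,
          ∑ v ∈ p.support, if v 0 = 2 ∧ v 1 = 0 then p.coeff v else 0,
          ∑ v ∈ p.support, if v 0 = 1 ∧ v 1 = 1 then p.coeff v else 0,
          ∑ v ∈ p.support, if v 0 = 0 ∧ v 1 = 2 then p.coeff v else 0, fun x => ?_⟩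
  have h1 : f x = ∑ v ∈ p.support, p.coeff v * (x 0 ^ v 0 * x 1 ^ v 1) := by
    rw [heval, MvPolynomial.eval_eq']
    exact Finset.sum_congr rfl fun v _ => by rw [Fin.prod_univ_two]
  rw [h1]
  simp only [Finset.sum_mul, ← Finset.sum_add_distrib]
  refine Finset.sum_congr rfl fun v hv => ?_
  have h1 := MvPolynomial.le_totalDegree hv
  have h2 : v.sum (fun _ e => e) = v 0 + v 1 := by
    rw [Finsupp.sum_fintype _ _ (fun _ => rfl), Fin.sum_univ_two]
  have h3 : v 0 + v 1 ≤ 2 := by omega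
  have hcase : (v 0 = 0 ∧ v 1 = 0) ∨ (v 0 = 1 ∧ v 1 = 0) ∨ (v 0 = 0 ∧ v 1 = 1) ∨
      (v 0 = 2 ∧ v 1 = 0) ∨ (v 0 = 1 ∧ v 1 = 1) ∨ (v 0 = 0 ∧ v 1 = 2) := by omega
  rcases hcase with ⟨h,h'⟩|⟨h,h'⟩|⟨h,h'⟩|⟨h,h'⟩|⟨h,h'⟩|⟨h,h'⟩ <;>
    simp [h, h'] <;> ring

lemma rep1 {f : V2 → ℝ} (hf : PolyDeg 1 f) :
    ∃ a b c : ℝ, ∀ x : V2, f x = a + b * x 0 + c * x 1 := by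
  obtain ⟨p, hdeg, heval⟩ := hf
  refine ⟨∑ v ∈ p.support, if v 0 = 0 ∧ v 1 = 0 then p.coeff v else 0,
          ∑ v ∈ p.support, if v 0 = 1 ∧ v 1 = 0 then p.coeff v else 0,
          ∑ v ∈ p.support, if v 0 = 0 ∧ v 1 = 1 then p.coeff v else 0, fun x => ?_⟩
  have h1 : f x = ∑ v ∈ p.support, p.coeff v * (x 0 ^ v 0 * x 1 ^ v 1) := by
    rw [heval, MvPolynomial.eval_eq']
    exact Finset.sum_congr rfl fun v _ => by rw [Fin.prod_univ_two]
  rw [h1]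
  simp only [Finset.sum_mul, ← Finset.sum_add_distrib]
  refine Finset.sum_congr rfl fun v hv => ?_
  have h1 := MvPolynomial.le_totalDegree hv
  have h2 : v.sum (fun _ e => e) = v 0 + v 1 := by
    rw [Finsupp.sum_fintype _ _ (fun _ => rfl), Fin.sum_univ_two]
  have h3 : v 0 + v 1 ≤ 1 := by omega
  have hcase : (v 0 = 0 ∧ v 1 = 0) ∨ (v 0 = 1 ∧ v 1 = 0) ∨ (v 0 = 0 ∧ v 1 = 1) := by
    omega
  rcases hcase with ⟨h,h'⟩|⟨h,h'⟩|⟨h,h'⟩ <;> simp [h, h'] <;> ring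

lemma quad6 {a b c d e h : ℝ} {G : ℝ → ℝ → ℝ}
    (hG : ∀ u v, G u v = a + b*u + c*v + d*u^2 + e*(u*v) + h*v^2)
    (h00 : G 0 0 = 0) (h10 : G 1 0 = 0) (h01 : G 0 1 = 0)
    (hm0 : G (1/2) 0 = 0) (h0m : G 0 (1/2) = 0) (hmm : G (1/2) (1/2) = 0) :
    ∀ u v, G u v = 0 := by
  rw [hG] at h00 h10 h01 hm0 h0m hmm
  norm_num at h00 h10 h01 hm0 h0m hmm
  intro u v
  rw [hG]
  have ha : a = 0 := by linarith
  have hb : b = 0 := by linarith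
  have hd : d = 0 := by linarith
  have hc : c = 0 := by linarith
  have hh : h = 0 := by linarith
  have he : e = 0 := by linarith
  simp [ha, hb, hc, hd, he, hh]

set_option maxHeartbeats 2000000 in
lemma span2 (A : Fin 3 → V2) (ind : AffineIndependent ℝ A) (x : V2) :
    ∃ u v : ℝ, x = A 0 + u • (A 1 - A 0) + v • (A 2 - A 0) := by
  rw [affineIndependent_iff_linearIndependent_vsub ℝ A 0] at ind
  set g : Fin 2 → V2 := fun j => A j.succ - A 0 with hg
  have hinj : Function.Injective
      (fun j : Fin 2 => (⟨j.succ, Fin.succ_ne_zero j⟩ : {x : Fin 3 // x ≠ 0})) := by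
    intro i j hij
    have := congrArg Subtype.val hij
    simpa [Fin.succ_inj] using this
  have hli : LinearIndependent ℝ g := by
    have := ind.comp _ hinj
    simpa only [Function.comp_def, vsub_eq_sub] using this
  have hcard : Fintype.card (Fin 2) = Module.finrank ℝ V2 := by
    simp [finrank_euclideanSpace_fin]
  let B := basisOfLinearIndependentOfCardEqFinrank hli hcard
  have hB : ∀ j, B j = g j := fun j => by
    simp [B, coe_basisOfLinearIndependentOfCardEqFinrank]
  have h := B.sum_repr (x - A 0)
  rw [Fin.sum_univ_two, hB 0, hB 1] at h
  refine ⟨B.repr (x - A 0) 0, B.repr (x - A 0) 1, ?_⟩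
  have h1 : A (Fin.succ 0) = A 1 := rfl
  have h2 : A (Fin.succ 1) = A 2 := rfl
  rw [hg] at h
  simp only [h1, h2] at h
  linear_combination (norm := module) -h

lemma coordsV2 (P D1 D2 : V2) (u v : ℝ) (j : Fin 2) :
    (P + u • D1 + v • D2) j = P j + u * D1 j + v * D2 j := rfl

lemma affine_quad {f : V2 → ℝ} (hf : PolyDeg 2 f) (P D1 D2 : V2) :
    ∃ a b c d e h : ℝ, ∀ u v : ℝ,
      f (P + u • D1 + v • D2)
        = a + b*u + c*v + d*u^2 + e*(u*v) + h*v^2 := by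
  obtain ⟨a, b, c, d, e, h, hrep⟩ := rep2 hf
  refine ⟨a + b*(P 0) + c*(P 1) + d*(P 0)^2 + e*(P 0 * P 1) + h*(P 1)^2,
    b*(D1 0) + c*(D1 1) + 2*d*(P 0)*(D1 0) + e*(P 0 * D1 1 + P 1 * D1 0) + 2*h*(P 1)*(D1 1),
    b*(D2 0) + c*(D2 1) + 2*d*(P 0)*(D2 0) + e*(P 0 * D2 1 + P 1 * D2 0) + 2*h*(P 1)*(D2 1),
    d*(D1 0)^2 + e*(D1 0 * D1 1) + h*(D1 1)^2,
    2*d*(D1 0)*(D2 0) + e*(D1 0 * D2 1 + D1 1 * D2 0) + 2*h*(D1 1)*(D2 1),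
    d*(D2 0)^2 + e*(D2 0 * D2 1) + h*(D2 1)^2, fun u v => ?_⟩
  rw [hrep, coordsV2, coordsV2]
  ring

lemma midpt_smul (x y : V2) : midpoint ℝ x y = (1/2 : ℝ) • (x + y) := by
  rw [midpoint_eq_smul_add, invOf_eq_inv]
  norm_num


/-- If `w ∈ [P₂(T)]² ⊕ b·P₂*(T)` vanishes at the three vertices and three edge
midpoints of the triangle `T`, then `w` vanishes identically on `∂T`, and hence
`w = b·p` for some `p ∈ P₂*(T)`. -/
theorem stmt10 (T : TriangleData) (w : V2 → V2) (hw : T.memW1 w)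
    (hvert : ∀ i, w (T.A i) = 0) (hmid : ∀ i, w (T.mid i) = 0) :
    (∀ i, ∀ t ∈ Set.Icc (0 : ℝ) 1, w (T.Ept i t) = 0) ∧
      ∃ p, T.memP2star p ∧ ∀ x, w x = T.bub x • p x := by
  obtain ⟨q, p, hq, hp, hwx⟩ := hw
  -- λ_i vanishes on the line through edge i
  have hne1 : ∀ i : Fin 3, i ≠ i + 1 := by decide
  have hne2 : ∀ i : Fin 3, i ≠ i + 2 := by decide
  have hlamE : ∀ (i : Fin 3) (t : ℝ), T.lam i (T.Ept i t) = 0 := by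
    intro i t
    obtain ⟨a, b, c, hl⟩ := rep1 (T.lam_poly i)
    have hEc : ∀ s : ℝ, ∀ j : Fin 2, (T.Ept i s) j
        = T.A (i+1) j + s * (T.A (i+2) j - T.A (i+1) j) := fun s j => rfl
    have hL : ∀ s : ℝ, T.lam i (T.Ept i s)
        = (a + b * T.A (i+1) 0 + c * T.A (i+1) 1)
          + s * (b * (T.A (i+2) 0 - T.A (i+1) 0) + c * (T.A (i+2) 1 - T.A (i+1) 1)) := by
      intro s
      rw [hl, hEc s 0, hEc s 1]
      ring
    have h0 : T.lam i (T.Ept i 0) = 0 := by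
      have : T.Ept i 0 = T.A (i+1) := by simp [TriangleData.Ept]
      rw [this, T.lam_vertex, if_neg (hne1 i)]
    have h1 : T.lam i (T.Ept i 1) = 0 := by
      have : T.Ept i 1 = T.A (i+2) := by
        simp only [TriangleData.Ept, one_smul]
        abel
      rw [this, T.lam_vertex, if_neg (hne2 i)]
    rw [hL] at h0 h1 ⊢
    have e0 : a + b * T.A (i+1) 0 + c * T.A (i+1) 1 = 0 := by linarith
    rw [e0] at h1 ⊢
    have e1 : b * (T.A (i+2) 0 - T.A (i+1) 0) + c * (T.A (i+2) 1 - T.A (i+1) 1) = 0 := by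
      linarith
    rw [e1]; ring
  -- the bubble vanishes on the edges, vertices and midpoints
  have hbubE : ∀ (i : Fin 3) (t : ℝ), T.bub (T.Ept i t) = 0 := fun i t =>
    Finset.prod_eq_zero (Finset.mem_univ i) (hlamE i t)
  have hmidE : ∀ i : Fin 3, T.mid i = T.Ept i (1/2 : ℝ) := by
    intro i
    rw [TriangleData.mid, TriangleData.Ept, midpt_smul]
    module
  have hbubV : ∀ j : Fin 3, T.bub (T.A j) = 0 := by
    intro j
    refine Finset.prod_eq_zero (Finset.mem_univ (j + 1)) ?_
    rw [T.lam_vertex]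
    rw [if_neg (show j + 1 ≠ j by revert j; decide)]
  have hbubM : ∀ i : Fin 3, T.bub (T.mid i) = 0 := fun i => by
    rw [hmidE]; exact hbubE i _
  -- q vanishes at the six nodes
  have hqx : ∀ x, q x = w x - T.bub x • p x := by
    intro x; rw [hwx]; abel
  have hqV : ∀ i, q (T.A i) = 0 := fun i => by
    rw [hqx, hvert, hbubV, zero_smul, sub_zero]
  have hqM : ∀ i, q (T.mid i) = 0 := fun i => by
    rw [hqx, hmid, hbubM, zero_smul, sub_zero]
  -- hence q = 0 everywhere
  have hq0 : ∀ x, q x = 0 := by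
    have hcomp : ∀ (j : Fin 2) (x : V2), q x j = 0 := by
      intro j x
      obtain ⟨a, b, c, d, e, h, hG⟩ :=
        affine_quad (hq j) (T.A 0) (T.A 1 - T.A 0) (T.A 2 - T.A 0)
      set G : ℝ → ℝ → ℝ :=
        fun u v => q (T.A 0 + u • (T.A 1 - T.A 0) + v • (T.A 2 - T.A 0)) j with hGdef
      have hz : ∀ y : V2, q y = 0 → ∀ u v : ℝ,
          T.A 0 + u • (T.A 1 - T.A 0) + v • (T.A 2 - T.A 0) = y → G u v = 0 := by
        intro y hy u v hpt
        rw [hGdef]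
        simp only [hpt, hy]
        rfl
      have h00 : G 0 0 = 0 := hz _ (hqV 0) 0 0 (by module)
      have h10 : G 1 0 = 0 := hz _ (hqV 1) 1 0 (by module)
      have h01 : G 0 1 = 0 := hz _ (hqV 2) 0 1 (by module)
      have hm0 : G (1/2) 0 = 0 := by
        refine hz _ (hqM 2) (1/2) 0 ?_
        have e1 : T.A (2+1) = T.A 0 := rfl
        have e2 : T.A (2+2) = T.A 1 := rfl
        rw [TriangleData.mid, e1, e2, midpt_smul]
        module
      have h0m : G 0 (1/2) = 0 := by
        refine hz _ (hqM 1) 0 (1/2) ?_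
        have e1 : T.A (1+1) = T.A 2 := rfl
        have e2 : T.A (1+2) = T.A 0 := rfl
        rw [TriangleData.mid, e1, e2, midpt_smul]
        module
      have hmm : G (1/2) (1/2) = 0 := by
        refine hz _ (hqM 0) (1/2) (1/2) ?_
        have e1 : T.A (0+1) = T.A 1 := rfl
        have e2 : T.A (0+2) = T.A 2 := rfl
        rw [TriangleData.mid, e1, e2, midpt_smul]
        module
      obtain ⟨u, v, huv⟩ := span2 T.A T.indep x
      have := quad6 hG h00 h10 h01 hm0 h0m hmm u v
      rw [huv]
      exact this
    intro x
    ext j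
    exact hcomp j x
  have hwb : ∀ x, w x = T.bub x • p x := by
    intro x; rw [hwx, hq0, zero_add]
  refine ⟨fun i t _ => ?_, p, hp, hwb⟩
  rw [hwb, hbubE, zero_smul]
end
end

section
/- Let T be a triangle and p ∈ [P₂(T)]² (written in barycentric monomials p = (Σ_{|α|=2} a_α λ^α, Σ_{|α|=2} b_α λ^α)ᵀ). If p·n_j = 0 on each edge e_j and ∫_{e_j} p·t_j dτ = 0 for each edge e_j, then p ≡ 0. -/
open MeasureTheory

noncomputable section

namespace Aux11

/-- 2D cross product. -/
def cr (u v : V2) : ℝ := u 0 * v 1 - u 1 * v 0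

lemma v2_ext {y z : V2} (h0 : y 0 = z 0) (h1 : y 1 = z 1) : y = z := by
  ext j
  fin_cases j
  · exact h0
  · exact h1

lemma dot_expand (u v : V2) : dot u v = u 0 * v 0 + u 1 * v 1 := by
  simp [dot, Fin.sum_univ_two]

lemma vec_eq_zero {w u v : V2} (h1 : dot w u = 0) (h2 : dot w v = 0)
    (h3 : cr u v ≠ 0) : w = 0 := by
  rw [dot_expand] at h1 h2
  have hcr : u 0 * v 1 - u 1 * v 0 ≠ 0 := h3
  have h0 : w 0 * (u 0 * v 1 - u 1 * v 0) = 0 := by linear_combination v 1 * h1 - u 1 * h2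
  have h1' : w 1 * (u 0 * v 1 - u 1 * v 0) = 0 := by linear_combination u 0 * h2 - v 0 * h1
  exact v2_ext ((mul_eq_zero.1 h0).resolve_right hcr) ((mul_eq_zero.1 h1').resolve_right hcr)

lemma norm_sq_one {n : V2} (h : ‖n‖ = 1) : n 0 ^ 2 + n 1 ^ 2 = 1 := by
  have h2 : ‖n‖ ^ 2 = 1 := by rw [h]; norm_num
  rw [EuclideanSpace.norm_eq, Real.sq_sqrt (by positivity)] at h2
  simpa [Fin.sum_univ_two, Real.norm_eq_abs, sq_abs] using h2

lemma quad_zero_of_Icc {A B C : ℝ} (h : ∀ t ∈ Set.Icc (0:ℝ) 1, A + B * t + C * t ^ 2 = 0) :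
    A = 0 ∧ B = 0 ∧ C = 0 := by
  have h0 := h 0 (by norm_num)
  have h1 := h 1 (by norm_num)
  have h2 := h (1/2) (by norm_num)
  norm_num at h0 h1 h2
  refine ⟨h0, by linarith, by linarith⟩

lemma integ_quad (A B C : ℝ) :
    (∫ t in (0:ℝ)..1, (A + B * t + C * t ^ 2)) = A + B / 2 + C / 3 := by
  have hA : IntervalIntegrable (fun _ : ℝ => A) volume 0 1 := intervalIntegrable_const
  have hB : IntervalIntegrable (fun t : ℝ => B * t) volume 0 1 :=
    (continuous_const.mul continuous_id).intervalIntegrable _ _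
  have hC : IntervalIntegrable (fun t : ℝ => C * t ^ 2) volume 0 1 :=
    (continuous_const.mul (continuous_pow 2)).intervalIntegrable _ _
  rw [intervalIntegral.integral_add (hA.add hB) hC, intervalIntegral.integral_add hA hB,
    intervalIntegral.integral_const, intervalIntegral.integral_const_mul,
    intervalIntegral.integral_const_mul, integral_id, integral_pow]
  norm_num
  ring

lemma eq_zero_of_unit_dot_cross {n d : V2} (hn : n 0 ^ 2 + n 1 ^ 2 = 1)
    (h1 : dot n d = 0) (h2 : cr n d = 0) : d = 0 := by
  rw [dot_expand] at h1
  have e2 : n 0 * d 1 - n 1 * d 0 = 0 := h2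
  refine v2_ext ?_ ?_
  · show d 0 = 0
    linear_combination n 0 * h1 - n 1 * e2 - d 0 * hn
  · show d 1 = 0
    linear_combination n 1 * h1 + n 0 * e2 - d 1 * hn

lemma cross_normals {n m u v : V2} (hn : n 0 ^ 2 + n 1 ^ 2 = 1) (hm : m 0 ^ 2 + m 1 ^ 2 = 1)
    (hnu : dot n u = 0) (hmv : dot m v = 0) (huv : cr u v ≠ 0) : cr n m ≠ 0 := by
  intro h
  apply huv
  rw [dot_expand] at hnu hmv
  have h' : n 0 * m 1 - n 1 * m 0 = 0 := h
  have hu0 : u 0 = -(n 1) * (n 0 * u 1 - n 1 * u 0) := by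
    linear_combination n 0 * hnu - u 0 * hn
  have hu1 : u 1 = n 0 * (n 0 * u 1 - n 1 * u 0) := by
    linear_combination n 1 * hnu - u 1 * hn
  have hv0 : v 0 = -(m 1) * (m 0 * v 1 - m 1 * v 0) := by
    linear_combination m 0 * hmv - v 0 * hm
  have hv1 : v 1 = m 0 * (m 0 * v 1 - m 1 * v 0) := by
    linear_combination m 1 * hmv - v 1 * hm
  show u 0 * v 1 - u 1 * v 0 = 0
  linear_combination v 1 * hu0 - v 0 * hu1 - ((n 0 * u 1 - n 1 * u 0) * n 0) * hv0 -
    ((n 0 * u 1 - n 1 * u 0) * n 1) * hv1 +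
    ((n 0 * u 1 - n 1 * u 0) * (m 0 * v 1 - m 1 * v 0)) * h'

lemma polydeg_line {f : V2 → ℝ} (hf : PolyDeg 2 f) (a v : V2) :
    ∃ A B C : ℝ, ∀ t : ℝ, f (a + t • v) = A + B * t + C * t ^ 2 := by
  obtain ⟨P, hdeg, hP⟩ := hf
  set Q : Polynomial ℝ :=
    MvPolynomial.eval₂ Polynomial.C
      (fun i => Polynomial.C (a i) + Polynomial.C (v i) * Polynomial.X) P with hQdef
  have heval : ∀ t : ℝ, Polynomial.eval t Q = f (a + t • v) := by
    intro t
    rw [hP, hQdef, MvPolynomial.polynomial_eval_eval₂]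
    have hc : (Polynomial.evalRingHom t).comp Polynomial.C = RingHom.id ℝ := by
      ext r; simp
    rw [hc]
    have h2 : (fun i =>
        Polynomial.eval t (Polynomial.C (a i) + Polynomial.C (v i) * Polynomial.X))
        = fun i => (a + t • v) i := by
      funext i
      rw [PiLp.add_apply, PiLp.smul_apply, smul_eq_mul]
      simp
      ring
    rw [h2]
    rfl
  have hdQ : Q.natDegree ≤ 2 := by
    rw [hQdef, P.as_sum, MvPolynomial.eval₂_sum]
    refine Polynomial.natDegree_sum_le_of_forall_le _ _ fun m hm => ?_
    rw [MvPolynomial.eval₂_monomial]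
    refine Polynomial.natDegree_mul_le.trans ?_
    simp only [Polynomial.natDegree_C, zero_add]
    refine le_trans ?_ (le_trans (MvPolynomial.le_totalDegree hm) hdeg)
    rw [Finsupp.prod, Finsupp.sum]
    refine (Polynomial.natDegree_prod_le _ _).trans ?_
    refine Finset.sum_le_sum fun i _ => ?_
    refine Polynomial.natDegree_pow_le.trans ?_
    have hb : (Polynomial.C (a i) + Polynomial.C (v i) * Polynomial.X).natDegree ≤ 1 := by
      refine (Polynomial.natDegree_add_le _ _).trans ?_
      simp only [Polynomial.natDegree_C, max_le_iff]
      exact ⟨Nat.zero_le _, Polynomial.natDegree_mul_le.trans (by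
        simp [Polynomial.natDegree_C, Polynomial.natDegree_X_le])⟩
    calc m i * (Polynomial.C (a i) + Polynomial.C (v i) * Polynomial.X).natDegree
        ≤ m i * 1 := Nat.mul_le_mul_left _ hb
      _ = m i := mul_one _
  refine ⟨Q.coeff 0, Q.coeff 1, Q.coeff 2, fun t => ?_⟩
  rw [← heval t, Polynomial.eval_eq_sum_range' (n := 3) (lt_of_le_of_lt hdQ (by norm_num)) t]
  simp [Finset.sum_range_succ]

end Aux11

namespace Aux11

lemma quad_dot {p : V2 → V2} (hp : PolyVecDeg 2 p) (a v w : V2) :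
    ∃ A B C : ℝ, ∀ t : ℝ, dot (p (a + t • v)) w = A + B * t + C * t ^ 2 := by
  obtain ⟨A0, B0, C0, h0⟩ := polydeg_line (hp 0) a v
  obtain ⟨A1, B1, C1, h1⟩ := polydeg_line (hp 1) a v
  refine ⟨A0 * w 0 + A1 * w 1, B0 * w 0 + B1 * w 1, C0 * w 0 + C1 * w 1, fun t => ?_⟩
  rw [dot_expand]
  linear_combination w 0 * h0 t + w 1 * h1 t

lemma cross_base (T : TriangleData) : cr (T.A 1 - T.A 0) (T.A 2 - T.A 0) ≠ 0 := by
  intro h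
  have h'' : (T.A 1 - T.A 0) 0 * (T.A 2 - T.A 0) 1 - (T.A 1 - T.A 0) 1 * (T.A 2 - T.A 0) 0 = 0 := h
  have hli : LinearIndependent ℝ ![T.A 1 - T.A 0, T.A 2 - T.A 0] := by
    have h1 := (affineIndependent_iff_linearIndependent_vsub ℝ T.A 0).1 T.indep
    have h2 := h1.comp
      (fun j : Fin 2 => if j = 0 then ⟨1, by decide⟩ else ⟨2, by decide⟩)
      (by intro a b hab; fin_cases a <;> fin_cases b <;> simp_all)
    convert h2 using 1
    funext j
    fin_cases j <;> simp [vsub_eq_sub]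
    all_goals rfl
  have hpair := LinearIndependent.pair_iff.1 hli
  set u : V2 := T.A 1 - T.A 0 with hu
  set v : V2 := T.A 2 - T.A 0 with hv
  have e1 := hpair (v 0) (-(u 0)) (by
    refine v2_ext ?_ ?_ <;>
      simp only [PiLp.add_apply, PiLp.smul_apply, PiLp.zero_apply, smul_eq_mul]
    · ring
    · linear_combination -h'')
  have e2 := hpair (v 1) (-(u 1)) (by
    refine v2_ext ?_ ?_ <;>
      simp only [PiLp.add_apply, PiLp.smul_apply, PiLp.zero_apply, smul_eq_mul]
    · linear_combination h''
    · ring)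
  have hu0 : u 0 = 0 := by have h3 := e1.2; linarith [neg_eq_zero.1 h3]
  have hu1 : u 1 = 0 := by have h3 := e2.2; linarith [neg_eq_zero.1 h3]
  have e3 := hpair 1 0 (by
    refine v2_ext ?_ ?_ <;>
      simp only [PiLp.add_apply, PiLp.smul_apply, PiLp.zero_apply, smul_eq_mul] <;>
      simp [hu0, hu1])
  exact one_ne_zero e3.1

end Aux11

set_option maxHeartbeats 2000000 in
/-- If `p ∈ [P₂(T)]²` satisfies `p·n_j = 0` on each edge `e_j` and
`∫_{e_j} p·t_j dτ = 0` for each edge `e_j`, then `p ≡ 0`. -/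
theorem stmt11 (T : TriangleData) (p : V2 → V2) (hp : PolyVecDeg 2 p)
    (hn : ∀ i, ∀ t ∈ Set.Icc (0 : ℝ) 1, dot (p (T.Ept i t)) (T.nv i) = 0)
    (ht : ∀ i, (∫ t in (0 : ℝ)..1, dot (p (T.Ept i t)) (T.tv i)) = 0) :
    ∀ x, p x = 0 := by
  classical
  have hbase := Aux11.cross_base T
  have hnv : ∀ i, (T.nv i 0) ^ 2 + (T.nv i 1) ^ 2 = 1 := fun i => Aux11.norm_sq_one (T.nv_unit i)
  have f3a : ∀ j : Fin 3, j + 1 + 1 = j + 2 := by decide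
  have f3b : ∀ j : Fin 3, j + 1 + 2 = j := by decide
  have f3c : ∀ j : Fin 3, j + 2 + 1 = j := by decide
  have f3d : ∀ j : Fin 3, j + 2 + 2 = j + 1 := by decide
  have hEpt : ∀ (i : Fin 3) (t : ℝ),
      T.Ept i t = T.A (i + 1) + t • (T.A (i + 2) - T.A (i + 1)) := fun _ _ => rfl
  have hedgecross : ∀ j : Fin 3, Aux11.cr (T.A j - T.A (j + 2)) (T.A (j + 1) - T.A j) ≠ 0 := by
    intro j h
    apply hbase
    fin_cases j <;>
      simp only [Aux11.cr, PiLp.sub_apply, Fin.isValue, Fin.reduceFinMk, Fin.reduceAdd, Fin.zero_eta, Fin.mk_one]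
        at h ⊢ <;>
      linear_combination h
  have hnall : ∀ (i : Fin 3) (t : ℝ), dot (p (T.Ept i t)) (T.nv i) = 0 := by
    intro i
    obtain ⟨A, B, C, h⟩ := Aux11.quad_dot hp (T.A (i + 1)) (T.A (i + 2) - T.A (i + 1)) (T.nv i)
    have h' : ∀ t : ℝ, dot (p (T.Ept i t)) (T.nv i) = A + B * t + C * t ^ 2 := by
      intro t; rw [hEpt]; exact h t
    obtain ⟨hA, hB, hC⟩ :=
      Aux11.quad_zero_of_Icc (fun t htm => (h' t).symm.trans (hn i t htm))
    intro t; rw [h' t, hA, hB, hC]; ring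
  have hvert : ∀ j, p (T.A j) = 0 := by
    intro j
    have e1 : T.Ept (j + 1) 1 = T.A j := by
      rw [hEpt, f3a, f3b, one_smul]
      abel
    have e2 : T.Ept (j + 2) 0 = T.A j := by
      rw [hEpt, f3c]
      simp
    have h1 : dot (p (T.A j)) (T.nv (j + 1)) = 0 := by rw [← e1]; exact hnall (j + 1) 1
    have h2 : dot (p (T.A j)) (T.nv (j + 2)) = 0 := by rw [← e2]; exact hnall (j + 2) 0
    have horth1 : dot (T.nv (j + 1)) (T.A j - T.A (j + 2)) = 0 := by
      have h3 := T.nv_orth (j + 1); rwa [f3b, f3a] at h3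
    have horth2 : dot (T.nv (j + 2)) (T.A (j + 1) - T.A j) = 0 := by
      have h3 := T.nv_orth (j + 2); rwa [f3d, f3c] at h3
    exact Aux11.vec_eq_zero h1 h2
      (Aux11.cross_normals (hnv (j + 1)) (hnv (j + 2)) horth1 horth2 (hedgecross j))
  have hdne : ∀ i : Fin 3, T.A (i + 2) - T.A (i + 1) ≠ 0 := by
    intro i h
    have h2 := hedgecross (i + 2)
    rw [f3d, f3c] at h2
    exact h2 (by rw [h]; simp [Aux11.cr])
  have hcrossnt : ∀ i : Fin 3, Aux11.cr (T.nv i) (T.tv i) ≠ 0 := by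
    intro i
    have hcnd : Aux11.cr (T.nv i) (T.A (i + 2) - T.A (i + 1)) ≠ 0 := fun h =>
      hdne i (Aux11.eq_zero_of_unit_dot_cross (hnv i) (T.nv_orth i) h)
    have htv : T.tv i = ‖T.A (i + 2) - T.A (i + 1)‖⁻¹ • (T.A (i + 2) - T.A (i + 1)) := rfl
    have hcr2 : Aux11.cr (T.nv i) (T.tv i)
        = ‖T.A (i + 2) - T.A (i + 1)‖⁻¹ * Aux11.cr (T.nv i) (T.A (i + 2) - T.A (i + 1)) := by
      rw [htv]
      simp only [Aux11.cr, PiLp.smul_apply, smul_eq_mul]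
      ring
    rw [hcr2]
    exact mul_ne_zero (inv_ne_zero (norm_ne_zero_iff.2 (hdne i))) hcnd
  have htall : ∀ (i : Fin 3) (t : ℝ), dot (p (T.Ept i t)) (T.tv i) = 0 := by
    intro i
    obtain ⟨A, B, C, h⟩ := Aux11.quad_dot hp (T.A (i + 1)) (T.A (i + 2) - T.A (i + 1)) (T.tv i)
    have h' : ∀ t : ℝ, dot (p (T.Ept i t)) (T.tv i) = A + B * t + C * t ^ 2 := by
      intro t; rw [hEpt]; exact h t
    have hA : A = 0 := by
      have h0 := h' 0
      have e : T.Ept i 0 = T.A (i + 1) := by rw [hEpt]; simp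
      rw [e, hvert (i + 1)] at h0
      have hz : dot (0 : V2) (T.tv i) = 0 := by simp [dot]
      rw [hz] at h0
      nlinarith [h0]
    have hABC : A + B + C = 0 := by
      have h1 := h' 1
      have e : T.Ept i 1 = T.A (i + 2) := by rw [hEpt, one_smul]; abel
      rw [e, hvert (i + 2)] at h1
      have hz : dot (0 : V2) (T.tv i) = 0 := by simp [dot]
      rw [hz] at h1
      nlinarith [h1]
    have hint : A + B / 2 + C / 3 = 0 := by
      have h2 := ht i
      simp only [h'] at h2
      rwa [Aux11.integ_quad] at h2
    have hB : B = 0 := by linarith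
    have hC : C = 0 := by linarith
    intro t; rw [h' t, hA, hB, hC]; ring
  have hedge0 : ∀ (i : Fin 3) (t : ℝ), p (T.Ept i t) = 0 := fun i t =>
    Aux11.vec_eq_zero (hnall i t) (htall i t) (hcrossnt i)
  intro x
  set u : V2 := T.A 1 - T.A 0 with hu
  set v : V2 := T.A 2 - T.A 0 with hv
  have hb' : u 0 * v 1 - u 1 * v 0 ≠ 0 := hbase
  obtain ⟨s, t, hx⟩ : ∃ s t : ℝ, x = T.A 0 + s • u + t • v := by
    refine ⟨((x - T.A 0) 0 * v 1 - (x - T.A 0) 1 * v 0) / (u 0 * v 1 - u 1 * v 0),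
      (u 0 * (x - T.A 0) 1 - u 1 * (x - T.A 0) 0) / (u 0 * v 1 - u 1 * v 0), ?_⟩
    refine (Aux11.v2_ext ?_ ?_).symm <;>
      simp only [PiLp.add_apply, PiLp.smul_apply, PiLp.sub_apply, smul_eq_mul] <;>
      rw [div_eq_mul_inv, div_eq_mul_inv]
    · linear_combination (x 0 - T.A 0 0) * mul_inv_cancel₀ hb'
    · linear_combination (x 1 - T.A 0 1) * mul_inv_cancel₀ hb'
  have hcomp : ∀ j : Fin 2, p x j = 0 := by
    intro j
    have hL2 : ∀ a : ℝ, p (T.A 0 + a • u + (0:ℝ) • v) j = 0 := by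
      intro a
      have e : T.A 0 + a • u + (0:ℝ) • v = T.Ept 2 a := by
        rw [hEpt, show ((2:Fin 3) + 1) = 0 from by decide, show ((2:Fin 3) + 2) = 1 from by decide,
          ← hu]
        simp
      rw [e, hedge0 2 a]
      simp
    have hL1 : ∀ b : ℝ, p (T.A 0 + (0:ℝ) • u + b • v) j = 0 := by
      intro b
      have e : T.A 0 + (0:ℝ) • u + b • v = T.Ept 1 (1 - b) := by
        rw [hEpt, show ((1:Fin 3) + 1) = 2 from by decide, show ((1:Fin 3) + 2) = 0 from by decide,
          hv]
        module
      rw [e, hedge0 1 (1 - b)]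
      simp
    have hL0 : ∀ a b : ℝ, a + b = 1 → p (T.A 0 + a • u + b • v) j = 0 := by
      intro a b hab
      have ha : a = 1 - b := by linarith
      have e : T.A 0 + a • u + b • v = T.Ept 0 b := by
        rw [hEpt, show ((0:Fin 3) + 1) = 1 from by decide, show ((0:Fin 3) + 2) = 2 from by decide,
          ha, hu, hv]
        module
      rw [e, hedge0 0 b]
      simp
    have hcol : ∀ a : ℝ, ∃ A B C : ℝ, ∀ b : ℝ,
        p (T.A 0 + a • u + b • v) j = A + B * b + C * b ^ 2 := by
      intro a
      obtain ⟨A, B, C, h⟩ := Aux11.polydeg_line (hp j) (T.A 0 + a • u) v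
      exact ⟨A, B, C, fun b => h b⟩
    have hrow : ∀ b : ℝ, ∃ A B C : ℝ, ∀ a : ℝ,
        p (T.A 0 + a • u + b • v) j = A + B * a + C * a ^ 2 := by
      intro b
      obtain ⟨A, B, C, h⟩ := Aux11.polydeg_line (hp j) (T.A 0 + b • v) u
      refine ⟨A, B, C, fun a => ?_⟩
      rw [show T.A 0 + a • u + b • v = T.A 0 + b • v + a • u from by module]
      exact h a
    have hdiag : ∃ A B C : ℝ, ∀ a : ℝ,
        p (T.A 0 + a • u + a • v) j = A + B * a + C * a ^ 2 := by
      obtain ⟨A, B, C, h⟩ := Aux11.polydeg_line (hp j) (T.A 0) (u + v)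
      refine ⟨A, B, C, fun a => ?_⟩
      rw [show T.A 0 + a • u + a • v = T.A 0 + a • (u + v) from by module]
      exact h a
    obtain ⟨a0, b0, c0, h0⟩ := hcol 0
    obtain ⟨a1, b1, c1, h1⟩ := hcol 1
    obtain ⟨a2, b2, c2, h2⟩ := hcol 2
    have hrep : ∀ a b : ℝ, p (T.A 0 + a • u + b • v) j
        = ((a - 1) * (a - 2) / 2) * (a0 + b0 * b + c0 * b ^ 2)
          + (a * (2 - a)) * (a1 + b1 * b + c1 * b ^ 2)
          + (a * (a - 1) / 2) * (a2 + b2 * b + c2 * b ^ 2) := by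
      intro a b
      obtain ⟨A, B, C, h⟩ := hrow b
      have e0 := (h 0).symm.trans (h0 b)
      have e1 := (h 1).symm.trans (h1 b)
      have e2 := (h 2).symm.trans (h2 b)
      rw [h a]
      linear_combination ((a - 1) * (a - 2) / 2) * e0 + (a * (2 - a)) * e1
        + (a * (a - 1) / 2) * e2
    have q0 := (h0 0).symm.trans (hL1 0)
    have q1 := (h0 1).symm.trans (hL1 1)
    have q2 := (h0 2).symm.trans (hL1 2)
    have r1 := (h1 0).symm.trans (hL2 1)
    have r2 := (h2 0).symm.trans (hL2 2)
    have s1 := (h2 (-1)).symm.trans (hL0 2 (-1) (by norm_num))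
    have s2 := (hrep (-1) 2).symm.trans (hL0 (-1) 2 (by norm_num))
    have s3 := (hrep 3 (-2)).symm.trans (hL0 3 (-2) (by norm_num))
    obtain ⟨A, B, C, hd⟩ := hdiag
    have d0 := (hrep 0 0).symm.trans (hd 0)
    have d1 := (hrep 1 1).symm.trans (hd 1)
    have d2 := (hrep 2 2).symm.trans (hd 2)
    have d3 := (hrep 3 3).symm.trans (hd 3)
    have dm1 := (hrep (-1) (-1)).symm.trans (hd (-1))
    have dm2 := (hrep (-2) (-2)).symm.trans (hd (-2))
    have ha0 : a0 = 0 := by linarith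
    have hb0 : b0 = 0 := by linarith
    have hc0 : c0 = 0 := by linarith
    have ha1 : a1 = 0 := by linarith
    have ha2 : a2 = 0 := by linarith
    have hb1 : b1 = 0 := by linarith
    have hc1 : c1 = 0 := by linarith
    have hb2 : b2 = 0 := by linarith
    have hc2 : c2 = 0 := by linarith
    rw [hx, hrep s t, ha0, hb0, hc0, ha1, hb1, hc1, ha2, hb2, hc2]
    ring
  refine Aux11.v2_ext ?_ ?_ <;> simp [hcomp]
end
end

section
/- Let φ ∈ P₄(T) on a triangle T with φ = 0 on ∂T, so φ = b·φ₁ with φ₁ ∈ P₁(T) and b = λ₁λ₂λ₃ the cubic bubble. If ∫_e ∂_n φ dτ = 0 for every edge e of T, then φ₁ ≡ 0 and hence φ ≡ 0. -/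
open MeasureTheory

noncomputable section

lemma poly1_affine {f : V2 → ℝ} (h : PolyDeg 1 f) :
    ∃ a b c : ℝ, ∀ x : V2, f x = a * x 0 + b * x 1 + c := by
  obtain ⟨p, hdeg, hev⟩ := h
  refine ⟨p.coeff (Finsupp.single 0 1), p.coeff (Finsupp.single 1 1), p.coeff 0, fun x => ?_⟩
  rw [hev]
  have hsub : p.support ⊆ {Finsupp.single 0 1, Finsupp.single 1 1, (0 : Fin 2 →₀ ℕ)} := by
    intro m hm
    have h1 : m.sum (fun _ e => e) ≤ 1 := le_trans (MvPolynomial.le_totalDegree hm) hdeg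
    have h2 : m 0 + m 1 ≤ 1 := by
      rw [Finsupp.sum_fintype _ _ (fun _ => rfl), Fin.sum_univ_two] at h1
      exact h1
    simp only [Finset.mem_insert, Finset.mem_singleton]
    rcases Nat.le_one_iff_eq_zero_or_eq_one.mp (le_trans (Nat.le_add_right _ _) h2) with h0 | h0
    · rcases Nat.le_one_iff_eq_zero_or_eq_one.mp (le_trans (Nat.le_add_left _ _) h2) with h1' | h1'
      · right; right; ext j; fin_cases j <;> simp [h0, h1']
      · right; left; ext j; fin_cases j <;> simp [Finsupp.single_apply, h0, h1']
    · left; ext j; fin_cases j <;> simp [Finsupp.single_apply, h0]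
      omega
  rw [MvPolynomial.eval_eq]
  rw [Finset.sum_subset hsub (by
    intro m _ hm; rw [MvPolynomial.notMem_support_iff.mp hm]; ring)]
  rw [Finset.sum_insert, Finset.sum_insert, Finset.sum_singleton]
  · simp [Finsupp.single_apply, Fin.prod_univ_two]
    ring
  · intro hh; rw [Finset.mem_singleton] at hh
    have := Finsupp.ext_iff.mp hh 1; simp [Finsupp.single_apply] at this
  · simp only [Finset.mem_insert, Finset.mem_singleton]
    push_neg
    refine ⟨fun hh => ?_, fun hh => ?_⟩
    · have := Finsupp.ext_iff.mp hh 0; simp [Finsupp.single_apply] at this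
    · have := Finsupp.ext_iff.mp hh 0; simp [Finsupp.single_apply] at this

noncomputable def Lmap (a b : ℝ) : V2 →L[ℝ] ℝ :=
  a • (EuclideanSpace.proj 0 : V2 →L[ℝ] ℝ) + b • (EuclideanSpace.proj 1 : V2 →L[ℝ] ℝ)

lemma Lmap_apply (a b : ℝ) (v : V2) : Lmap a b v = a * v 0 + b * v 1 := by
  simp [Lmap]

lemma hasFDeriv_affine (a b c : ℝ) (f : V2 → ℝ) (hf : ∀ x, f x = a * x 0 + b * x 1 + c)
    (x : V2) : HasFDerivAt f (Lmap a b) x := by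
  have : f = fun y : V2 => a * y 0 + b * y 1 + c := funext hf
  rw [this]
  exact ((((EuclideanSpace.proj 0 : V2 →L[ℝ] ℝ).hasFDerivAt.const_mul a).add
    ((EuclideanSpace.proj 1 : V2 →L[ℝ] ℝ).hasFDerivAt.const_mul b)).add_const c)

lemma affine_seg (a b c : ℝ) (f : V2 → ℝ) (hf : ∀ x, f x = a * x 0 + b * x 1 + c)
    (y z : V2) (t : ℝ) : f (y + t • (z - y)) = (1 - t) * f y + t * f z := by
  simp only [hf, PiLp.add_apply, PiLp.smul_apply, PiLp.sub_apply, smul_eq_mul]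
  ring

lemma integ (K u v : ℝ) :
    (∫ t in (0:ℝ)..1, K * ((1 - t) * t) * ((1 - t) * u + t * v)) = K * (u + v) / 12 := by
  have h : ∀ t : ℝ, K * ((1 - t) * t) * ((1 - t) * u + t * v)
      = (K * (u - v)) * t ^ 3 + ((K * (v - 2 * u)) * t ^ 2 + (K * u) * t ^ 1) := fun t => by ring
  simp_rw [h]
  have i3 : IntervalIntegrable (fun t : ℝ => (K * (u - v)) * t ^ 3) MeasureTheory.volume 0 1 :=
    (by fun_prop : Continuous fun t : ℝ => (K * (u - v)) * t ^ 3).intervalIntegrable _ _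
  have i2 : IntervalIntegrable (fun t : ℝ => (K * (v - 2 * u)) * t ^ 2) MeasureTheory.volume 0 1 :=
    (by fun_prop : Continuous fun t : ℝ => (K * (v - 2 * u)) * t ^ 2).intervalIntegrable _ _
  have i1 : IntervalIntegrable (fun t : ℝ => (K * u) * t ^ 1) MeasureTheory.volume 0 1 :=
    (by fun_prop : Continuous fun t : ℝ => (K * u) * t ^ 1).intervalIntegrable _ _
  rw [intervalIntegral.integral_add i3 (i2.add i1), intervalIntegral.integral_add i2 i1]
  simp_rw [intervalIntegral.integral_const_mul]
  rw [integral_pow, integral_pow, integral_pow]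
  norm_num
  ring

lemma fin3_facts : ∀ i : Fin 3, i ≠ i + 1 ∧ i ≠ i + 2 ∧ i + 1 ≠ i + 2 := by decide

/-- Let `φ ∈ P₄(T)` vanish on `∂T`, so `φ = b·φ₁` with `φ₁ ∈ P₁(T)` and `b` the cubic
bubble.  If `∫_e ∂_n φ dτ = 0` for every edge `e` of `T`, then `φ₁ ≡ 0` and hence
`φ ≡ 0`. -/
theorem stmt14 (T : TriangleData) (phi1 : V2 → ℝ) (h1 : PolyDeg 1 phi1)
    (hmom : ∀ i, (∫ t in (0 : ℝ)..1, T.nder (fun x => T.bub x * phi1 x) i t) = 0) :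
    (∀ x, phi1 x = 0) ∧ ∀ x, T.bub x * phi1 x = 0 := by
  obtain ⟨pa, pb, pc, hp⟩ := poly1_affine h1
  choose la lb lc hl using fun j => poly1_affine (T.lam_poly j)
  have hEpt : ∀ (i : Fin 3) (t : ℝ), T.Ept i t = T.A (i+1) + t • (T.A (i+2) - T.A (i+1)) :=
    fun i t => rfl
  have hlam_seg : ∀ (j i : Fin 3) (t : ℝ), T.lam j (T.Ept i t)
      = (1-t) * T.lam j (T.A (i+1)) + t * T.lam j (T.A (i+2)) := by
    intro j i t; rw [hEpt]; exact affine_seg _ _ _ _ (hl j) _ _ t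
  have hphi_seg : ∀ (i : Fin 3) (t : ℝ), phi1 (T.Ept i t)
      = (1-t) * phi1 (T.A (i+1)) + t * phi1 (T.A (i+2)) := by
    intro i t; rw [hEpt]; exact affine_seg _ _ _ _ hp _ _ t
  have key : ∀ (i : Fin 3) (t : ℝ), T.nder (fun x => T.bub x * phi1 x) i t
      = (la i * T.nv i 0 + lb i * T.nv i 1) * ((1-t)*t)
        * ((1-t) * phi1 (T.A (i+1)) + t * phi1 (T.A (i+2))) := by
    intro i t
    set P := T.Ept i t with hPdef
    have h0 := hasFDeriv_affine _ _ _ _ (hl 0) P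
    have h1' := hasFDeriv_affine _ _ _ _ (hl 1) P
    have h2' := hasFDeriv_affine _ _ _ _ (hl 2) P
    have hphp := hasFDeriv_affine _ _ _ _ hp P
    have hprod : HasFDerivAt (fun x => T.lam 0 x * T.lam 1 x * T.lam 2 x * phi1 x)
        ((T.lam 0 P * T.lam 1 P * T.lam 2 P) • Lmap pa pb
          + phi1 P • ((T.lam 0 P * T.lam 1 P) • Lmap (la 2) (lb 2)
            + T.lam 2 P • (T.lam 0 P • Lmap (la 1) (lb 1)
              + T.lam 1 P • Lmap (la 0) (lb 0)))) P :=
      ((h0.mul h1').mul h2').mul hphp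
    have hfun : (fun x => T.bub x * phi1 x)
        = fun x => T.lam 0 x * T.lam 1 x * T.lam 2 x * phi1 x := by
      funext x; rw [TriangleData.bub, Fin.prod_univ_three]
    rw [TriangleData.nder, hfun, ← hPdef, hprod.fderiv]
    have e0 := hlam_seg 0 i t
    have e1 := hlam_seg 1 i t
    have e2 := hlam_seg 2 i t
    have ep := hphi_seg i t
    rw [← hPdef] at e0 e1 e2 ep
    simp only [ContinuousLinearMap.add_apply, ContinuousLinearMap.smul_apply,
      smul_eq_mul, Lmap_apply]
    rcases (by decide : ∀ m : Fin 3, m = 0 ∨ m = 1 ∨ m = 2) i with rfl | rfl | rfl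
    · simp only [show (0:Fin 3)+1 = 1 from rfl, show (0:Fin 3)+2 = 2 from rfl] at e0 e1 e2 ep ⊢
      simp only [T.lam_vertex] at e0 e1 e2
      norm_num [Fin.ext_iff] at e0 e1 e2
      rw [e0, e1, e2, ep]; ring
    · simp only [show (1:Fin 3)+1 = 2 from rfl, show (1:Fin 3)+2 = 0 from rfl] at e0 e1 e2 ep ⊢
      simp only [T.lam_vertex] at e0 e1 e2
      norm_num [Fin.ext_iff] at e0 e1 e2
      rw [e0, e1, e2, ep]; ring
    · simp only [show (2:Fin 3)+1 = 0 from rfl, show (2:Fin 3)+2 = 1 from rfl] at e0 e1 e2 ep ⊢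
      simp only [T.lam_vertex] at e0 e1 e2
      norm_num [Fin.ext_iff] at e0 e1 e2
      rw [e0, e1, e2, ep]; ring
  have Cne : ∀ i : Fin 3, la i * T.nv i 0 + lb i * T.nv i 1 ≠ 0 := by
    intro i
    obtain ⟨hij1, hij2, hij3⟩ := fin3_facts i
    set n0 := T.nv i 0 with hn0
    set n1 := T.nv i 1 with hn1
    set d0 := (T.A (i+2) - T.A (i+1)) 0 with hd0
    set d1 := (T.A (i+2) - T.A (i+1)) 1 with hd1
    set w0 := (T.A i - T.A (i+1)) 0 with hw0d
    set w1 := (T.A i - T.A (i+1)) 1 with hw1d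
    have hsub : ∀ (x y : V2) (j : Fin 2), (x - y) j = x j - y j := fun x y j => rfl
    have hN : n0^2 + n1^2 = 1 := by
      have h := T.nv_unit i
      rw [EuclideanSpace.norm_eq] at h
      have hS : (∑ j, ‖T.nv i j‖^2) = 1 := by
        have h2 := congrArg (·^2) h
        simp only [one_pow] at h2
        rwa [Real.sq_sqrt (by positivity)] at h2
      simpa [Fin.sum_univ_two, sq_abs, Real.norm_eq_abs] using hS
    have hSd : n0 * d0 + n1 * d1 = 0 := by
      have h := T.nv_orth i
      simp only [dot, Fin.sum_univ_two] at h
      exact h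
    have h1w : la i * w0 + lb i * w1 = 1 := by
      have e1 := hl i (T.A i)
      have e2 := hl i (T.A (i+1))
      rw [T.lam_vertex i i, if_pos rfl] at e1
      rw [T.lam_vertex i (i+1), if_neg hij1] at e2
      rw [hw0d, hw1d, hsub, hsub]
      linear_combination e2 - e1
    have hLd : la i * d0 + lb i * d1 = 0 := by
      have e1 := hl i (T.A (i+2))
      have e2 := hl i (T.A (i+1))
      rw [T.lam_vertex i (i+2), if_neg hij2] at e1
      rw [T.lam_vertex i (i+1), if_neg hij1] at e2
      rw [hd0, hd1, hsub, hsub]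
      linear_combination e2 - e1
    have hdne : T.A (i+2) - T.A (i+1) ≠ 0 :=
      sub_ne_zero.mpr (fun hh => hij3 (T.indep.injective hh.symm))
    have hD : 0 < d0^2 + d1^2 := by
      rcases lt_or_ge 0 (d0^2 + d1^2) with h | h
      · exact h
      · exfalso
        apply hdne
        have hz0 : d0 = 0 := by nlinarith [sq_nonneg d0, sq_nonneg d1]
        have hz1 : d1 = 0 := by nlinarith [sq_nonneg d0, sq_nonneg d1]
        ext j
        fin_cases j
        · exact hz0
        · exact hz1
    have hw0 : w0 * (d0^2 + d1^2) = (n0*w0 + n1*w1) * n0 * (d0^2 + d1^2) + (d0*w0 + d1*w1) * d0 := by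
      linear_combination (w0*(n1*d1 - n0*d0) - w1*(n1*d0 + n0*d1)) * hSd
        + (w0*(d0^2 - (d0^2+d1^2)) + w1*d0*d1) * hN
    have hw1 : w1 * (d0^2 + d1^2) = (n0*w0 + n1*w1) * n1 * (d0^2 + d1^2) + (d0*w0 + d1*w1) * d1 := by
      linear_combination (w1*(n0*d0 - n1*d1) - w0*(n0*d1 + n1*d0)) * hSd
        + (w1*(d1^2 - (d0^2+d1^2)) + w0*d0*d1) * hN
    intro hc
    have hzero : d0^2 + d1^2 = 0 := by
      linear_combination (la i)*hw0 + (lb i)*hw1 - (d0^2+d1^2)*h1w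
        + ((n0*w0+n1*w1)*(d0^2+d1^2))*hc + (d0*w0+d1*w1)*hLd
    linarith
  have sumEq : ∀ i : Fin 3, phi1 (T.A (i+1)) + phi1 (T.A (i+2)) = 0 := by
    intro i
    have h := hmom i
    simp_rw [key i] at h
    rw [integ] at h
    rcases mul_eq_zero.mp (by linarith : (la i * T.nv i 0 + lb i * T.nv i 1)
        * (phi1 (T.A (i+1)) + phi1 (T.A (i+2))) = 0) with h' | h'
    · exact absurd h' (Cne i)
    · exact h'
  have uzero : ∀ j : Fin 3, phi1 (T.A j) = 0 := by
    have e0 := sumEq 0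
    have e1 := sumEq 1
    have e2 := sumEq 2
    rw [show ((0:Fin 3)+1 = 1) from rfl, show ((0:Fin 3)+2 = 2) from rfl] at e0
    rw [show ((1:Fin 3)+1 = 2) from rfl, show ((1:Fin 3)+2 = 0) from rfl] at e1
    rw [show ((2:Fin 3)+1 = 0) from rfl, show ((2:Fin 3)+2 = 1) from rfl] at e2
    intro j
    rcases (by decide : ∀ m : Fin 3, m = 0 ∨ m = 1 ∨ m = 2) j with rfl | rfl | rfl <;> linarith
  -- linear independence of the edge vectors at A 0
  have li0 := (affineIndependent_iff_linearIndependent_vsub ℝ T.A 0).mp T.indep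
  have li : LinearIndependent ℝ ![T.A 1 - T.A 0, T.A 2 - T.A 0] := by
    have inj : Function.Injective
        (![⟨1, by decide⟩, ⟨2, by decide⟩] : Fin 2 → {j : Fin 3 // j ≠ 0}) := by
      decide
    have h := li0.comp _ inj
    have : ((fun j : {j : Fin 3 // j ≠ 0} => T.A j -ᵥ T.A 0)
        ∘ (![⟨1, by decide⟩, ⟨2, by decide⟩] : Fin 2 → {j : Fin 3 // j ≠ 0}))
        = ![T.A 1 - T.A 0, T.A 2 - T.A 0] := by
      funext j; fin_cases j <;> simp [vsub_eq_sub]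
    rwa [this] at h
  have pair : ∀ s t : ℝ, s • (T.A 1 - T.A 0) + t • (T.A 2 - T.A 0) = 0 → s = 0 ∧ t = 0 := by
    intro s t hst
    have h := Fintype.linearIndependent_iff.mp li ![s, t] (by
      rw [Fin.sum_univ_two]
      simpa using hst)
    exact ⟨h 0, h 1⟩
  have hsub : ∀ (x y : V2) (j : Fin 2), (x - y) j = x j - y j := fun x y j => rfl
  set B0 := (T.A 1 - T.A 0) 0 with hB0
  set B1 := (T.A 1 - T.A 0) 1 with hB1
  set C0 := (T.A 2 - T.A 0) 0 with hC0
  set C1 := (T.A 2 - T.A 0) 1 with hC1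
  have hcross : B0 * C1 - B1 * C0 ≠ 0 := by
    intro hcr
    have hv1 : C0 • (T.A 1 - T.A 0) + (-B0) • (T.A 2 - T.A 0) = 0 := by
      ext j
      rcases (by decide : ∀ m : Fin 2, m = 0 ∨ m = 1) j with rfl | rfl <;>
        simp only [PiLp.add_apply, PiLp.smul_apply, smul_eq_mul, PiLp.zero_apply]
      · rw [← hB0, ← hC0]; ring
      · rw [← hB1, ← hC1]; linarith [hcr]
    obtain ⟨hc0, hb0⟩ := pair _ _ hv1
    have hb0' : B0 = 0 := by linarith
    have hv2 : C1 • (T.A 1 - T.A 0) + (-B1) • (T.A 2 - T.A 0) = 0 := by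
      ext j
      rcases (by decide : ∀ m : Fin 2, m = 0 ∨ m = 1) j with rfl | rfl <;>
        simp only [PiLp.add_apply, PiLp.smul_apply, smul_eq_mul, PiLp.zero_apply]
      · rw [← hB0, ← hC0]; rw [hb0', hc0]; ring
      · rw [← hB1, ← hC1]; ring
    obtain ⟨hc1, hb1⟩ := pair _ _ hv2
    have hb1' : B1 = 0 := by linarith
    have hBzero : T.A 1 - T.A 0 = 0 := by
      ext j
      rcases (by decide : ∀ m : Fin 2, m = 0 ∨ m = 1) j with rfl | rfl
      · exact hb0'
      · exact hb1'
    have := (pair 1 0 (by rw [hBzero]; simp)).1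
    norm_num at this
  have hF : ∀ j : Fin 3, pa * (T.A j) 0 + pb * (T.A j) 1 + pc = 0 := by
    intro j; rw [← hp]; exact uzero j
  have hpB : pa * B0 + pb * B1 = 0 := by
    rw [hB0, hB1, hsub, hsub]
    linear_combination hF 1 - hF 0
  have hpC : pa * C0 + pb * C1 = 0 := by
    rw [hC0, hC1, hsub, hsub]
    linear_combination hF 2 - hF 0
  have hpa : pa = 0 := by
    rcases mul_eq_zero.mp (show pa * (B0 * C1 - B1 * C0) = 0 by
      linear_combination C1 * hpB - B1 * hpC) with h' | h'
    · exact h'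
    · exact absurd h' hcross
  have hpb : pb = 0 := by
    rcases mul_eq_zero.mp (show pb * (B0 * C1 - B1 * C0) = 0 by
      linear_combination (-C0) * hpB + B0 * hpC) with h' | h'
    · exact h'
    · exact absurd h' hcross
  have hpc : pc = 0 := by
    have := hF 0
    rw [hpa, hpb] at this
    linarith
  have hphi0 : ∀ x, phi1 x = 0 := by
    intro x
    rw [hp, hpa, hpb, hpc]
    ring
  exact ⟨hphi0, fun x => by rw [hphi0 x, mul_zero]⟩
end
end

section
/- Discrete coercivity: let V_h ⊂ [H₀¹(Ω)]² be a piecewise-H² finite element space satisfying the broken Korn inequality ‖v‖_{H²_h} ≤ C₀(‖∇_h ε(v)‖_{L²} + ‖ε(v)‖_{L²}) and the Poincaré inequality ‖v‖_{L²} ≤ C_p‖∇v‖_{L²}. Then for the broken bilinear form a_h(v,w) = (ℂε(v),ε(w)) + (𝔻∇_h ε(v),∇_h ε(w)) with μ > 0, λ ≥ 0, 0 < ι < 1/√2, there exists C > 0 independent of h and ι such that a_h(v,v) ≥ C(ι²‖v‖²_{H²_h} + ‖v‖²_{H¹}) for all v ∈ V_h. -/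
noncomputable section

/-- Discrete coercivity of the broken strain gradient form.  For `v ∈ V_h ⊆ [H₀¹(Ω)]²`
(a piecewise-`H²` finite element space) write `eps = ‖ε(v)‖_{L²}`, `divN = ‖∇·v‖_{L²}`,
`gradEps = ‖∇_hε(v)‖_{L²}`, `graddiv = ‖∇_h(∇·v)‖_{L²}`, `L2 = ‖v‖_{L²}`,
`gradN = ‖∇v‖_{L²}`, `H1 = ‖v‖_{H¹}`, `H2h = ‖v‖_{H²_h}`, so that
`a_h(v,v) = 2μ‖ε(v)‖² + λ‖∇·v‖² + ι²(2μ‖∇_hε(v)‖² + λ‖∇_h(∇·v)‖²)`.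
Assume the broken Korn inequality `‖v‖_{H²_h} ≤ C₀(‖∇_hε(v)‖ + ‖ε(v)‖)`, the Poincaré
inequality `‖v‖_{L²} ≤ C_p‖∇v‖_{L²}`, and (valid since `v ∈ H₀¹`) the first Korn
inequality `‖∇v‖² ≤ 2‖ε(v)‖²`.  Then for `μ > 0`, `λ ≥ 0`, `0 < ι < 1/√2` there is
`C > 0` independent of `h` and `ι` with `a_h(v,v) ≥ C(ι²‖v‖²_{H²_h} + ‖v‖²_{H¹})`. -/
theorem stmt16 (mu lam C₀ Cp : ℝ) (hmu : 0 < mu) (hlam : 0 ≤ lam)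
    (hC₀ : 0 < C₀) (hCp : 0 < Cp) :
    ∃ C > 0, ∀ iot ah eps divN gradEps graddiv L2 gradN H1 H2h : ℝ,
      0 < iot → iot < 1 / Real.sqrt 2 →
      0 ≤ eps → 0 ≤ divN → 0 ≤ gradEps → 0 ≤ graddiv → 0 ≤ L2 → 0 ≤ gradN →
      0 ≤ H1 → 0 ≤ H2h →
      -- broken H² Korn inequality on V_h
      H2h ≤ C₀ * (gradEps + eps) →
      -- Poincaré inequality
      L2 ≤ Cp * gradN →
      -- first Korn inequality (v ∈ [H₀¹(Ω)]²)
      gradN ^ 2 ≤ 2 * eps ^ 2 →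
      -- full H¹ norm
      H1 ^ 2 = L2 ^ 2 + gradN ^ 2 →
      -- the broken bilinear form
      ah = 2 * mu * eps ^ 2 + lam * divN ^ 2 +
        iot ^ 2 * (2 * mu * gradEps ^ 2 + lam * graddiv ^ 2) →
      C * (iot ^ 2 * H2h ^ 2 + H1 ^ 2) ≤ ah := by
  refine ⟨2*mu/(2*C₀^2+2*Cp^2+2), by positivity, ?_⟩
  intro iot ah eps divN gradEps graddiv L2 gradN H1 H2h hi hi2 he hd hg hgd hl hgn hh1 hh2 hkorn hp hk1 hH1 hah
  have hK : (0:ℝ) < 2*C₀^2+2*Cp^2+2 := by positivity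
  have hs2 : Real.sqrt 2 ^ 2 = 2 := Real.sq_sqrt (by norm_num)
  have hs2pos : (0:ℝ) < Real.sqrt 2 := Real.sqrt_pos.mpr (by norm_num)
  have hi2' : iot ^ 2 ≤ 1 / 2 := by
    have h1 : iot ^ 2 ≤ (1 / Real.sqrt 2) ^ 2 := by
      apply pow_le_pow_left₀ hi.le hi2.le
    calc iot ^ 2 ≤ (1 / Real.sqrt 2) ^ 2 := h1
      _ = 1 / 2 := by rw [div_pow, hs2]; norm_num
  have hA : H2h ^ 2 ≤ 2 * C₀ ^ 2 * (gradEps ^ 2 + eps ^ 2) := by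
    nlinarith [sq_nonneg (gradEps - eps), mul_nonneg hC₀.le (by linarith : (0:ℝ) ≤ gradEps + eps)]
  have hB : iot ^ 2 * H2h ^ 2 ≤ iot ^ 2 * (2 * C₀ ^ 2 * (gradEps ^ 2 + eps ^ 2)) :=
    mul_le_mul_of_nonneg_left hA (sq_nonneg iot)
  have hC : iot ^ 2 * (2 * C₀ ^ 2 * eps ^ 2) ≤ C₀ ^ 2 * eps ^ 2 := by
    nlinarith [mul_nonneg (by linarith : (0:ℝ) ≤ 1/2 - iot ^ 2) (by positivity : (0:ℝ) ≤ C₀ ^ 2 * eps ^ 2)]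
  have heq : iot ^ 2 * (2 * C₀ ^ 2 * (gradEps ^ 2 + eps ^ 2))
      = 2 * C₀ ^ 2 * (iot ^ 2 * gradEps ^ 2) + iot ^ 2 * (2 * C₀ ^ 2 * eps ^ 2) := by ring
  have hB' : iot ^ 2 * H2h ^ 2 ≤ 2 * C₀ ^ 2 * (iot ^ 2 * gradEps ^ 2) + C₀ ^ 2 * eps ^ 2 := by
    linarith [hB, hC, heq.le]
  have hL2 : L2 ^ 2 ≤ Cp ^ 2 * gradN ^ 2 := by
    have h := pow_le_pow_left₀ hl hp 2
    rwa [mul_pow] at h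
  have hD : H1 ^ 2 ≤ (2 * Cp ^ 2 + 2) * eps ^ 2 := by
    have h1 := mul_le_mul_of_nonneg_left hk1 (sq_nonneg Cp)
    have h2 : Cp ^ 2 * (2 * eps ^ 2) + 2 * eps ^ 2 = (2 * Cp ^ 2 + 2) * eps ^ 2 := by ring
    linarith [hL2, hk1, hH1, h1, h2.le]
  have key : (2*mu/(2*C₀^2+2*Cp^2+2)) * (iot^2*H2h^2 + H1^2)
      ≤ 2*mu*eps^2 + iot^2*(2*mu*gradEps^2) := by
    have hX : (0:ℝ) ≤ iot ^ 2 * gradEps ^ 2 := by positivity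
    have hS : iot^2*H2h^2 + H1^2
        ≤ (2*C₀^2+2*Cp^2+2) * (iot^2*gradEps^2 + eps^2) := by
      have hnn1 : (0:ℝ) ≤ (2*Cp^2+2) * (iot^2*gradEps^2) := by positivity
      have hnn2 : (0:ℝ) ≤ C₀^2 * eps^2 := by positivity
      have hId : (2*C₀^2+2*Cp^2+2) * (iot^2*gradEps^2 + eps^2)
          = (2*C₀^2*(iot^2*gradEps^2) + C₀^2*eps^2) + (2*Cp^2+2)*eps^2
            + ((2*Cp^2+2) * (iot^2*gradEps^2) + C₀^2*eps^2) := by ring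
      linarith [hB', hD, hId.le, hnn1, hnn2]
    calc (2*mu/(2*C₀^2+2*Cp^2+2)) * (iot^2*H2h^2 + H1^2)
        ≤ (2*mu/(2*C₀^2+2*Cp^2+2)) * ((2*C₀^2+2*Cp^2+2) * (iot^2*gradEps^2 + eps^2)) :=
          mul_le_mul_of_nonneg_left hS (by positivity)
      _ = 2*mu*(iot^2*gradEps^2 + eps^2) := by
          rw [div_mul_eq_mul_div, mul_comm ((2:ℝ)*C₀^2+2*Cp^2+2), ← mul_assoc,
            mul_div_assoc, div_self hK.ne', mul_one]
      _ = 2*mu*eps^2 + iot^2*(2*mu*gradEps^2) := by ring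
  have hrest : 2*mu*eps^2 + iot^2*(2*mu*gradEps^2) ≤ ah := by
    have h1 : (0:ℝ) ≤ lam * divN ^ 2 := mul_nonneg hlam (sq_nonneg divN)
    have h2 : (0:ℝ) ≤ iot ^ 2 * (lam * graddiv ^ 2) :=
      mul_nonneg (sq_nonneg iot) (mul_nonneg hlam (sq_nonneg graddiv))
    have hId2 : 2 * mu * eps ^ 2 + lam * divN ^ 2 +
        iot ^ 2 * (2 * mu * gradEps ^ 2 + lam * graddiv ^ 2)
        = (2*mu*eps^2 + iot^2*(2*mu*gradEps^2)) + lam * divN ^ 2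
          + iot ^ 2 * (lam * graddiv ^ 2) := by ring
    rw [hah, hId2]
    linarith [h1, h2]
  linarith
end
end
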